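/- arXiv:1004.0395 — 9 statements merged into one kernel-verified Lean document; each statement's English description precedes it below -/
import Mathlib

section
/- Fix an integer B ≥ 1. For every n ≥ 1 and every 0 ≤ v ≤ B, the probability p_n(v) that exactly v blocks are collectively held by n independent peers satisfies the recursion p_n(v) = (1/B) · ∑_{h=0}^{min(v, B−1)} ∑_{k=v−h}^{v} p_{n−1}(k) · ψ_h(k,v), with base case p_0(0) = 1 and p_0(v) = 0 for v ≠ 0. -/
/-- Single-peer block-ownership distribution in the `γ = ∞` model: a peer owning
`h ≤ B - 1` blocks has a uniformly random `h`-element subset, with `h` uniform on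
`{0, …, B-1}`; the full set has probability `0`. -/
noncomputable def wmu (B : ℕ) (s : Finset (Fin B)) : ℝ :=
  if s.card < B then 1 / (B * (B.choose s.card)) else 0

/-- `pmu B n v` : probability that exactly `v` blocks are collectively held by `n`
independent peers, each with block set drawn from `wmu B`. -/
noncomputable def pmu (B n v : ℕ) : ℝ :=
  ∑ f : Fin n → Finset (Fin B),
    if (Finset.univ.biUnion f).card = v then ∏ u, wmu B (f u) else 0

/-- The hypergeometric probability `ψ_h(k,v) = C(k, h-v+k) C(B-k, v-k) / C(B,h)`
(zero when `v < k` or `v > h + k`). -/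
noncomputable def psi (B h k v : ℕ) : ℝ :=
  if k ≤ v ∧ v ≤ h + k then
    ((k.choose (h + k - v) : ℝ) * ((B - k).choose (v - k) : ℝ)) / (B.choose h)
  else 0

noncomputable def wf (B h : ℕ) : ℝ := if h < B then 1 / (B * (B.choose h)) else 0

lemma wmu_eq (B : ℕ) (s : Finset (Fin B)) : wmu B s = wf B s.card := rfl

lemma pmu_zero (B w : ℕ) : pmu B 0 w = if w = 0 then 1 else 0 := by
  simp [pmu, eq_comm]

lemma powerset_sum_card {α} [DecidableEq α] (T : Finset α) (g : ℕ → ℝ) :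
    ∑ a ∈ T.powerset, g a.card
      = ∑ j ∈ Finset.range (T.card + 1), (T.card.choose j : ℝ) * g j := by
  rw [Finset.powerset_card_disjiUnion]
  refine (Finset.sum_disjiUnion _ _ _).trans ?_
  refine Finset.sum_congr rfl fun j hj => ?_
  calc ∑ a ∈ Finset.powersetCard j T, g a.card
      = ∑ _a ∈ Finset.powersetCard j T, g j :=
        Finset.sum_congr rfl fun a ha => by rw [(Finset.mem_powersetCard.mp ha).2]
    _ = (T.card.choose j : ℝ) * g j := by
        rw [Finset.sum_const, Finset.card_powersetCard, nsmul_eq_mul]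

lemma aux_split {B : ℕ} (T : Finset (Fin B)) (F : Finset (Fin B) → ℝ) :
    ∑ s : Finset (Fin B), F s = ∑ a ∈ T.powerset, ∑ b ∈ Tᶜ.powerset, F (a ∪ b) := by
  rw [← Finset.sum_product']
  apply Finset.sum_nbij' (i := fun s => (s ∩ T, s \ T)) (j := fun p => p.1 ∪ p.2)
  · intro s _
    simp only [Finset.mem_product, Finset.mem_powerset]
    exact ⟨Finset.inter_subset_right, fun x hx => by simp_all [Finset.mem_sdiff]⟩
  · intro p _; exact Finset.mem_univ _
  · intro s _
    ext x; simp only [Finset.mem_union, Finset.mem_inter, Finset.mem_sdiff]; tauto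
  · intro p hp
    simp only [Finset.mem_product, Finset.mem_powerset] at hp
    obtain ⟨h1, h2⟩ := hp
    have e2 : ∀ x, x ∈ p.2 → x ∉ T := fun x hx => by
      have := h2 hx; simpa using this
    refine Prod.ext ?_ ?_ <;> simp only
    · ext x
      simp only [Finset.mem_inter, Finset.mem_union]
      constructor
      · rintro ⟨h | h, hT⟩
        · exact h
        · exact absurd hT (e2 x h)
      · intro h; exact ⟨Or.inl h, h1 h⟩
    · ext x
      simp only [Finset.mem_sdiff, Finset.mem_union]
      constructor
      · rintro ⟨h | h, hT⟩
        · exact absurd (h1 h) hT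
        · exact h
      · intro h; exact ⟨Or.inr h, e2 x h⟩
  · intro s _
    congr 1
    ext x
    simp only [Finset.mem_union, Finset.mem_inter, Finset.mem_sdiff]
    tauto

lemma core (B v k : ℕ) (hB : 1 ≤ B) (hv : v ≤ B) (T : Finset (Fin B)) (hT : T.card = k) :
    ∑ s : Finset (Fin B), (if (s ∪ T).card = v then wmu B s else 0)
      = ∑ h ∈ Finset.range B, (1 / (B : ℝ)) * psi B h k v := by
  have hkB : k ≤ B := by
    rw [← hT]; simpa using Finset.card_le_univ T
  rw [aux_split T]
  have step1 : ∀ a ∈ T.powerset, ∀ b ∈ Tᶜ.powerset,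
      (if ((a ∪ b) ∪ T).card = v then wmu B (a ∪ b) else 0)
        = (if k + b.card = v then wf B (a.card + b.card) else 0) := by
    intro a ha b hb
    rw [Finset.mem_powerset] at ha hb
    have hdTb : Disjoint T b := (disjoint_compl_right).mono_right hb
    have hdab : Disjoint a b := hdTb.mono_left ha
    have h1 : (a ∪ b) ∪ T = T ∪ b := by
      ext x
      simp only [Finset.mem_union]
      have hax := @ha x
      tauto
    rw [h1, Finset.card_union_of_disjoint hdTb, hT, wmu_eq,
      Finset.card_union_of_disjoint hdab]
  rw [Finset.sum_congr rfl fun a ha => Finset.sum_congr rfl fun b hb => step1 a ha b hb]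
  by_cases hkv : k ≤ v
  · set c : ℝ := ((B - k).choose (v - k) : ℝ) with hc
    have step2 : ∀ a ∈ T.powerset,
        ∑ b ∈ Tᶜ.powerset, (if k + b.card = v then wf B (a.card + b.card) else 0)
          = c * wf B (a.card + (v - k)) := by
      intro a _
      calc ∑ b ∈ Tᶜ.powerset, (if k + b.card = v then wf B (a.card + b.card) else 0)
          = ∑ b ∈ Tᶜ.powerset, (if b.card = v - k then wf B (a.card + (v - k)) else 0) := by
            refine Finset.sum_congr rfl fun b _ => ?_
            by_cases hb : b.card = v - k
            · rw [if_pos (by omega), if_pos hb, hb]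
            · rw [if_neg (by omega), if_neg hb]
        _ = ∑ b ∈ Tᶜ.powerset.filter (fun b => b.card = v - k),
              wf B (a.card + (v - k)) := (Finset.sum_filter _ _).symm
        _ = c * wf B (a.card + (v - k)) := by
            rw [Finset.sum_const, ← Finset.powersetCard_eq_filter,
              Finset.card_powersetCard, nsmul_eq_mul]
            have hcc : Tᶜ.card = B - k := by
              rw [Finset.card_compl, hT, Fintype.card_fin]
            rw [hcc]
    rw [Finset.sum_congr rfl step2]
    have step3 := powerset_sum_card T (fun x => c * wf B (x + (v - k)))
    rw [hT] at step3
    rw [step3]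
    set W : ℕ → ℝ := fun h =>
      if v ≤ h + k then c * (k.choose (h + k - v) : ℝ) * wf B h else 0 with hW
    have claim1 : ∀ h < B, (1 / (B : ℝ)) * psi B h k v = W h := by
      intro h hh
      by_cases hvh : v ≤ h + k
      · rw [hW]
        simp only [psi, if_pos (And.intro hkv hvh), if_pos hvh, wf, if_pos hh]
        have h1 : ((B.choose h : ℝ)) ≠ 0 := by
          exact_mod_cast (Nat.choose_pos (le_of_lt hh)).ne'
        have h2 : (B : ℝ) ≠ 0 := by positivity
        field_simp
        ring
      · simp only [hW, psi, hvh, and_false, if_false, if_neg hvh, mul_zero]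
    calc ∑ j ∈ Finset.range (k + 1), (k.choose j : ℝ) * (c * wf B (j + (v - k)))
        = ∑ h ∈ Finset.Icc (v - k) v, W h := by
          apply Finset.sum_nbij' (i := fun j => j + (v - k)) (j := fun h => h - (v - k))
          · intro j hj
            simp only [Finset.mem_range] at hj
            simp only [Finset.mem_Icc]
            omega
          · intro h hh
            simp only [Finset.mem_Icc] at hh
            simp only [Finset.mem_range]
            omega
          · intro j hj; omega
          · intro h hh
            simp only [Finset.mem_Icc] at hh
            omega
          · intro j hj
            simp only [Finset.mem_range] at hj
            have hg : v ≤ j + (v - k) + k := by omega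
            have hidx : j + (v - k) + k - v = j := by omega
            rw [hW]
            simp only [if_pos hg, hidx]
            ring
      _ = ∑ h ∈ Finset.range (B + 1), W h := by
          apply Finset.sum_subset
          · intro h hh
            simp only [Finset.mem_Icc] at hh
            simp only [Finset.mem_range]
            omega
          · intro h hh1 hh2
            simp only [Finset.mem_range] at hh1
            simp only [Finset.mem_Icc] at hh2
            simp only [hW]
            split_ifs with hg
            · have : k < h + k - v := by omega
              simp [Nat.choose_eq_zero_of_lt this]
            · rfl
      _ = ∑ h ∈ Finset.range B, W h := by
          rw [Finset.sum_range_succ]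
          have : W B = 0 := by
            rw [hW]
            simp [wf]
          rw [this, add_zero]
      _ = ∑ h ∈ Finset.range B, (1 / (B : ℝ)) * psi B h k v := by
          refine Finset.sum_congr rfl fun h hh => ?_
          rw [claim1 h (Finset.mem_range.mp hh)]
  · rw [Finset.sum_congr rfl fun a _ => Finset.sum_congr rfl fun b _ =>
      if_neg (show ¬ k + b.card = v by omega)]
    simp [psi, hkv]

lemma biUnion_cons {B m : ℕ} (x : Finset (Fin B)) (g : Fin m → Finset (Fin B)) :
    Finset.univ.biUnion (Fin.cons x g : Fin (m + 1) → Finset (Fin B))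
      = x ∪ Finset.univ.biUnion g := by
  ext a
  simp only [Finset.mem_biUnion, Finset.mem_union, Finset.mem_univ, true_and]
  rw [Fin.exists_fin_succ]
  simp [Fin.cons_zero, Fin.cons_succ]

lemma pmu_rec (B : ℕ) (hB : 1 ≤ B) (m v : ℕ) (hv : v ≤ B) :
    pmu B (m + 1) v = ∑ k ∈ Finset.range (B + 1),
      pmu B m k * (∑ h ∈ Finset.range B, (1 / (B : ℝ)) * psi B h k v) := by
  set U : (Fin m → Finset (Fin B)) → Finset (Fin B) := fun g => Finset.univ.biUnion g with hU
  set C : ℕ → ℝ := fun k => ∑ h ∈ Finset.range B, (1 / (B : ℝ)) * psi B h k v with hC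
  have hUcard : ∀ g, (U g).card ≤ B := by
    intro g
    simpa using Finset.card_le_univ (U g)
  calc pmu B (m + 1) v
      = ∑ p : Finset (Fin B) × (Fin m → Finset (Fin B)),
          (if (Finset.univ.biUnion (Fin.cons p.1 p.2 : Fin (m+1) → _)).card = v then
            ∏ u, wmu B ((Fin.cons p.1 p.2 : Fin (m+1) → _) u) else 0) := by
        rw [pmu, ← Equiv.sum_comp (Fin.consEquiv (fun _ : Fin (m+1) => Finset (Fin B)))]
        exact Finset.sum_congr rfl fun p _ => rfl
    _ = ∑ x : Finset (Fin B), ∑ g : Fin m → Finset (Fin B),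
          (if (x ∪ U g).card = v then wmu B x * ∏ u, wmu B (g u) else 0) := by
        rw [Fintype.sum_prod_type]
        refine Finset.sum_congr rfl fun x _ => Finset.sum_congr rfl fun g _ => ?_
        rw [biUnion_cons, Fin.prod_univ_succ]
        simp [Fin.cons_zero, Fin.cons_succ, hU]
    _ = ∑ g : Fin m → Finset (Fin B), ∑ x : Finset (Fin B),
          (if (x ∪ U g).card = v then wmu B x * ∏ u, wmu B (g u) else 0) :=
        Finset.sum_comm
    _ = ∑ g : Fin m → Finset (Fin B), (∏ u, wmu B (g u)) * C ((U g).card) := by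
        refine Finset.sum_congr rfl fun g _ => ?_
        simp only [hC]
        rw [← core B v ((U g).card) hB hv (U g) rfl, Finset.mul_sum]
        refine Finset.sum_congr rfl fun x _ => ?_
        split_ifs <;> ring
    _ = ∑ g : Fin m → Finset (Fin B), ∑ k ∈ Finset.range (B + 1),
          (if (U g).card = k then (∏ u, wmu B (g u)) * C k else 0) := by
        refine Finset.sum_congr rfl fun g _ => ?_
        rw [Finset.sum_ite_eq (Finset.range (B + 1)) ((U g).card)
          (fun k => (∏ u, wmu B (g u)) * C k), if_pos (by simpa using Nat.lt_succ_of_le (hUcard g))]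
    _ = ∑ k ∈ Finset.range (B + 1), ∑ g : Fin m → Finset (Fin B),
          (if (U g).card = k then (∏ u, wmu B (g u)) * C k else 0) :=
        Finset.sum_comm
    _ = ∑ k ∈ Finset.range (B + 1), pmu B m k * C k := by
        refine Finset.sum_congr rfl fun k _ => ?_
        rw [pmu, Finset.sum_mul]
        refine Finset.sum_congr rfl fun g _ => ?_
        split_ifs <;> ring

lemma psi_zero_of_gt (B h k v : ℕ) (hgt : v < h) : psi B h k v = 0 := by
  unfold psi
  split_ifs with hcond
  · rw [Nat.choose_eq_zero_of_lt (show k < h + k - v by omega)]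
    simp
  · rfl

/-- for `B ≥ 1`, `n ≥ 1` and `0 ≤ v ≤ B`,
`p_n(v) = (1/B) ∑_{h=0}^{min(v,B-1)} ∑_{k=v-h}^{v} p_{n-1}(k) ψ_h(k,v)`,
with base case `p_0(0) = 1` and `p_0(v) = 0` for `v ≠ 0`. -/
theorem stmt0 (B : ℕ) (hB : 1 ≤ B) (n : ℕ) (hn : 1 ≤ n) (v : ℕ) (hv : v ≤ B) :
    pmu B n v =
      (1 / (B : ℝ)) * (∑ h ∈ Finset.range (min v (B - 1) + 1),
        ∑ k ∈ Finset.Icc (v - h) v, pmu B (n - 1) k * psi B h k v) ∧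
    pmu B 0 0 = 1 ∧ (∀ w : ℕ, w ≠ 0 → pmu B 0 w = 0) := by
  refine ⟨?_, by simp [pmu_zero], fun w hw => by simp [pmu_zero, hw]⟩
  obtain ⟨m, rfl⟩ : ∃ m, n = m + 1 := ⟨n - 1, by omega⟩
  rw [pmu_rec B hB m v hv]
  simp only [Nat.add_sub_cancel]
  calc ∑ k ∈ Finset.range (B + 1),
        pmu B m k * ∑ h ∈ Finset.range B, (1 / (B : ℝ)) * psi B h k v
      = (1 / (B : ℝ)) * ∑ k ∈ Finset.range (B + 1), ∑ h ∈ Finset.range B,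
          pmu B m k * psi B h k v := by
        rw [Finset.mul_sum]
        refine Finset.sum_congr rfl fun k _ => ?_
        rw [Finset.mul_sum, Finset.mul_sum]
        refine Finset.sum_congr rfl fun h _ => ?_
        ring
    _ = (1 / (B : ℝ)) * ∑ h ∈ Finset.range B, ∑ k ∈ Finset.range (B + 1),
          pmu B m k * psi B h k v := by rw [Finset.sum_comm]
    _ = (1 / (B : ℝ)) * ∑ h ∈ Finset.range B, ∑ k ∈ Finset.Icc (v - h) v,
          pmu B m k * psi B h k v := by
        congr 1
        refine Finset.sum_congr rfl fun h _ => ?_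
        symm
        apply Finset.sum_subset
        · intro k hk
          simp only [Finset.mem_Icc] at hk
          simp only [Finset.mem_range]
          omega
        · intro k hk1 hk2
          simp only [Finset.mem_range] at hk1
          simp only [Finset.mem_Icc] at hk2
          have : psi B h k v = 0 := by
            unfold psi
            rw [if_neg (by omega)]
          rw [this, mul_zero]
    _ = (1 / (B : ℝ)) * ∑ h ∈ Finset.range (min v (B - 1) + 1),
          ∑ k ∈ Finset.Icc (v - h) v, pmu B m k * psi B h k v := by
        congr 1
        symm
        apply Finset.sum_subset
        · intro h hh
          simp only [Finset.mem_range] at hh ⊢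
          omega
        · intro h hh1 hh2
          simp only [Finset.mem_range] at hh1 hh2
          refine Finset.sum_eq_zero fun k hk => ?_
          rw [psi_zero_of_gt B h k v (by omega), mul_zero]
end

section
/- Fix an integer B ≥ 1. For every n ≥ 1: p_n(0) = B^{−n}; for every 0 < v < B, p_n(v) = p_n(v−1) + p_{n−1}(v) · (B+1)/(B·(B−v+1)); and p_n(B) = 1 − ∑_{v=0}^{B−1} p_n(v). -/
/-- closed form `g(t) = (B+1)/(B(B+1-t))` -/
noncomputable def gg (B t : ℕ) : ℝ := ((B : ℝ) + 1) / (B * ((B : ℝ) + 1 - t))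

lemma hockey (B t : ℕ) (ht : t ≤ B) :
    ∑ m ∈ Finset.range (t + 1), (B - m).choose (t - m) = (B + 1).choose t := by
  rw [← Finset.sum_range_reflect]
  have h1 : ∀ m ∈ Finset.range (t + 1),
      (B - (t + 1 - 1 - m)).choose (t - (t + 1 - 1 - m)) = (m + (B - t)).choose (B - t) := by
    intro m hm
    rw [Finset.mem_range] at hm
    have h2 : B - (t + 1 - 1 - m) = (B - t) + m := by omega
    have h3 : t - (t + 1 - 1 - m) = m := by omega
    rw [h2, h3, Nat.add_comm (B - t) m, Nat.choose_symm_add]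
  rw [Finset.sum_congr rfl h1, Nat.sum_range_add_choose t (B - t)]
  have : t + (B - t) + 1 = B + 1 := by omega
  rw [this]
  rw [← Nat.choose_symm (by omega : B - t + 1 ≤ B + 1)]
  congr 1
  omega

lemma gsum_eq (B : ℕ) (T : Finset (Fin B)) (hT : T.card < B) :
    ∑ s ∈ T.powerset, wmu B s = gg B T.card := by
  have hB : 0 < B := lt_of_le_of_lt (Nat.zero_le _) hT
  have hBR : (0:ℝ) < B := by exact_mod_cast hB
  set t := T.card with htdef
  have ht : t ≤ B := le_of_lt hT
  have h1 : ∑ s ∈ T.powerset, wmu B s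
      = ∑ m ∈ Finset.range (t+1), t.choose m • (1 / ((B:ℝ) * (B.choose m))) := by
    rw [← Finset.sum_powerset_apply_card (fun m => 1 / ((B:ℝ) * (B.choose m)))]
    refine Finset.sum_congr rfl fun s hs => ?_
    rw [Finset.mem_powerset] at hs
    have : s.card < B := lt_of_le_of_lt (Finset.card_le_card hs) hT
    simp only [wmu, if_pos this]
  have h2 : ∀ m ∈ Finset.range (t+1),
      t.choose m • (1 / ((B:ℝ) * (B.choose m)))
        = ((B - m).choose (t - m) : ℝ) / (B * (B.choose t)) := by
    intro m hm
    rw [Finset.mem_range, Nat.lt_succ_iff] at hm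
    have hmB : m ≤ B := le_trans hm ht
    have hcm : (0:ℝ) < (B.choose m : ℝ) := by exact_mod_cast Nat.choose_pos hmB
    have hct : (0:ℝ) < (B.choose t : ℝ) := by exact_mod_cast Nat.choose_pos ht
    have hnat : B.choose t * t.choose m = B.choose m * (B - m).choose (t - m) :=
      Nat.choose_mul hm
    have hnatR : (B.choose t : ℝ) * t.choose m = (B.choose m : ℝ) * (B - m).choose (t - m) := by
      exact_mod_cast hnat
    rw [nsmul_eq_mul, mul_one_div, div_eq_div_iff (by positivity) (by positivity)]
    nlinarith [hnatR]
  rw [h1, Finset.sum_congr rfl h2, ← Finset.sum_div]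
  have h3 : ∑ m ∈ Finset.range (t+1), ((B - m).choose (t - m) : ℝ) = ((B+1).choose t : ℝ) := by
    exact_mod_cast congrArg (Nat.cast : ℕ → ℝ) (hockey B t ht)
  rw [h3, gg]
  have hct : (0:ℝ) < (B.choose t : ℝ) := by exact_mod_cast Nat.choose_pos ht
  have htR : (t:ℝ) ≤ B := by exact_mod_cast ht
  have hnat : B.choose t * (B + 1) = (B+1).choose t * (B + 1 - t) := Nat.choose_mul_succ_eq B t
  have hnatR : (B.choose t : ℝ) * ((B:ℝ) + 1) = ((B+1).choose t : ℝ) * ((B:ℝ) + 1 - t) := by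
    have := congrArg (Nat.cast : ℕ → ℝ) hnat
    push_cast [Nat.cast_sub (by omega : t ≤ B + 1)] at this
    linarith [this]
  rw [div_eq_div_iff (by positivity) (by nlinarith)]
  nlinarith [hnatR]


noncomputable def pex (B n : ℕ) (S : Finset (Fin B)) : ℝ :=
  ∑ f : Fin n → Finset (Fin B),
    if Finset.univ.biUnion f = S then ∏ u, wmu B (f u) else 0

lemma powerset_eq_filter (B : ℕ) (T : Finset (Fin B)) :
    T.powerset = Finset.univ.filter (· ⊆ T) := by
  ext s; simp

lemma cumul_eq (B n : ℕ) (T : Finset (Fin B)) :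
    (∑ f : Fin n → Finset (Fin B),
      if Finset.univ.biUnion f ⊆ T then ∏ u, wmu B (f u) else 0)
      = (∑ s ∈ T.powerset, wmu B s) ^ n := by
  have h1 : ∀ f : Fin n → Finset (Fin B),
      (if Finset.univ.biUnion f ⊆ T then ∏ u, wmu B (f u) else 0)
        = ∏ u, (if f u ⊆ T then wmu B (f u) else 0) := by
    intro f
    by_cases h : Finset.univ.biUnion f ⊆ T
    · rw [if_pos h]
      refine Finset.prod_congr rfl fun u _ => ?_
      exact (if_pos (le_trans (Finset.subset_biUnion_of_mem f (Finset.mem_univ u)) h)).symm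
    · rw [if_neg h]
      rw [Finset.biUnion_subset] at h
      push_neg at h
      obtain ⟨u, _, hu⟩ := h
      have hz : (if f u ⊆ T then wmu B (f u) else (0:ℝ)) = 0 := if_neg hu
      exact (Finset.prod_eq_zero (Finset.mem_univ u) hz).symm
  rw [Finset.sum_congr rfl (fun f _ => h1 f)]
  have h2 := Finset.prod_univ_sum (fun _ : Fin n => (Finset.univ : Finset (Finset (Fin B))))
      (fun _ s => if s ⊆ T then wmu B s else 0)
  rw [Fintype.piFinset_univ] at h2
  rw [← h2]
  have h3 : (∑ s : Finset (Fin B), if s ⊆ T then wmu B s else 0)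
      = ∑ s ∈ T.powerset, wmu B s := by
    rw [powerset_eq_filter, Finset.sum_filter]
  rw [Finset.prod_congr rfl (fun u _ => h3), Finset.prod_const, Finset.card_univ,
    Fintype.card_fin]

lemma sum_pex_powerset (B n : ℕ) (T : Finset (Fin B)) :
    ∑ S ∈ T.powerset, pex B n S = (∑ s ∈ T.powerset, wmu B s) ^ n := by
  rw [← cumul_eq B n T]
  unfold pex
  rw [Finset.sum_comm]
  refine Finset.sum_congr rfl fun f _ => ?_
  rw [Finset.sum_ite_eq (T.powerset) (Finset.univ.biUnion f)
    (fun _ => ∏ u, wmu B (f u))]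
  simp only [Finset.mem_powerset]

lemma pmu_eq_sum_pex (B n v : ℕ) :
    pmu B n v = ∑ S ∈ Finset.powersetCard v Finset.univ, pex B n S := by
  unfold pmu pex
  rw [Finset.sum_comm]
  refine Finset.sum_congr rfl fun f _ => ?_
  rw [Finset.sum_ite_eq (Finset.powersetCard v Finset.univ) (Finset.univ.biUnion f)
    (fun _ => ∏ u, wmu B (f u))]
  simp only [Finset.mem_powersetCard_univ]

lemma count_supersets (B v : ℕ) (hv : v ≤ B) (S : Finset (Fin B)) (hS : S.card ≤ v) :
    (((Finset.powersetCard v (Finset.univ : Finset (Fin B))).filter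
        (fun T => S ⊆ T)).card : ℕ)
      = (B - S.card).choose (v - S.card) := by
  have hcompl : (Sᶜ : Finset (Fin B)).card = B - S.card := by
    rw [Finset.card_compl, Fintype.card_fin]
  rw [← hcompl, ← Finset.card_powersetCard]
  refine Finset.card_bij' (fun T _ => T \ S) (fun A _ => S ∪ A) ?_ ?_ ?_ ?_
  · intro T hT
    rw [Finset.mem_filter, Finset.mem_powersetCard_univ] at hT
    obtain ⟨hTv, hST⟩ := hT
    rw [Finset.mem_powersetCard]
    constructor
    · intro x hx
      rw [Finset.mem_sdiff] at hx
      rw [Finset.mem_compl]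
      exact hx.2
    · rw [Finset.card_sdiff_of_subset hST, hTv]
  · intro A hA
    rw [Finset.mem_powersetCard] at hA
    obtain ⟨hAc, hAcard⟩ := hA
    have hdisj : Disjoint S A := by
      rw [Finset.disjoint_left]
      intro x hxS hxA
      exact (Finset.mem_compl.mp (hAc hxA)) hxS
    rw [Finset.mem_filter, Finset.mem_powersetCard_univ]
    refine ⟨?_, Finset.subset_union_left⟩
    rw [Finset.card_union_of_disjoint hdisj, hAcard]
    omega
  · intro T hT
    rw [Finset.mem_filter] at hT
    exact Finset.union_sdiff_of_subset hT.2
  · intro A hA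
    rw [Finset.mem_powersetCard] at hA
    have hdisj : Disjoint S A := by
      rw [Finset.disjoint_left]
      intro x hxS hxA
      exact (Finset.mem_compl.mp (hA.1 hxA)) hxS
    exact Finset.union_sdiff_cancel_left hdisj

lemma count_supersets_empty (B v : ℕ) (S : Finset (Fin B)) (hS : v < S.card) :
    ((Finset.powersetCard v (Finset.univ : Finset (Fin B))).filter
        (fun T => S ⊆ T)) = ∅ := by
  rw [Finset.filter_eq_empty_iff]
  intro T hT
  rw [Finset.mem_powersetCard_univ] at hT
  intro hST
  have := Finset.card_le_card hST
  omega

lemma powersetCard_univ_eq_filter (B k : ℕ) :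
    Finset.powersetCard k (Finset.univ : Finset (Fin B))
      = Finset.univ.filter (fun S => S.card = k) := by
  ext S; simp [Finset.mem_powersetCard_univ]

lemma star (B n v : ℕ) (hv : v ≤ B) :
    ∑ k ∈ Finset.range (v+1), ((B - k).choose (v - k) : ℝ) * pmu B n k
      = ∑ T ∈ Finset.powersetCard v Finset.univ, (∑ s ∈ T.powerset, wmu B s) ^ n := by
  symm
  calc ∑ T ∈ Finset.powersetCard v (Finset.univ : Finset (Fin B)),
        (∑ s ∈ T.powerset, wmu B s) ^ n
      = ∑ T ∈ Finset.powersetCard v (Finset.univ : Finset (Fin B)),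
          ∑ S ∈ T.powerset, pex B n S := by
        exact Finset.sum_congr rfl fun T _ => (sum_pex_powerset B n T).symm
    _ = ∑ T ∈ Finset.powersetCard v (Finset.univ : Finset (Fin B)),
          ∑ S : Finset (Fin B), if S ⊆ T then pex B n S else 0 := by
        refine Finset.sum_congr rfl fun T _ => ?_
        rw [powerset_eq_filter, Finset.sum_filter]
    _ = ∑ S : Finset (Fin B), ∑ T ∈ Finset.powersetCard v (Finset.univ : Finset (Fin B)),
          if S ⊆ T then pex B n S else 0 := Finset.sum_comm
    _ = ∑ S : Finset (Fin B),
          (if S.card ≤ v then ((B - S.card).choose (v - S.card) : ℝ) else 0) * pex B n S := by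
        refine Finset.sum_congr rfl fun S _ => ?_
        rw [show (∑ T ∈ Finset.powersetCard v (Finset.univ : Finset (Fin B)),
              if S ⊆ T then pex B n S else 0)
            = ∑ T ∈ (Finset.powersetCard v (Finset.univ : Finset (Fin B))).filter
                (fun T => S ⊆ T), pex B n S from (Finset.sum_filter _ _).symm,
          Finset.sum_const]
        by_cases h : S.card ≤ v
        · rw [count_supersets B v hv S h, if_pos h, nsmul_eq_mul]
        · rw [count_supersets_empty B v S (by omega), if_neg h]
          simp
    _ = ∑ k ∈ Finset.range (B+1), ∑ S ∈ Finset.univ.filter (fun S : Finset (Fin B) => S.card = k),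
          (if S.card ≤ v then ((B - S.card).choose (v - S.card) : ℝ) else 0) * pex B n S := by
        refine (Finset.sum_fiberwise_of_maps_to ?_ _).symm
        intro S _
        rw [Finset.mem_range, Nat.lt_succ_iff]
        have := Finset.card_le_univ S
        simpa using this
    _ = ∑ k ∈ Finset.range (B+1),
          (if k ≤ v then ((B - k).choose (v - k) : ℝ) else 0) * pmu B n k := by
        refine Finset.sum_congr rfl fun k _ => ?_
        have h1 : ∀ S ∈ Finset.univ.filter (fun S : Finset (Fin B) => S.card = k),
            (if S.card ≤ v then ((B - S.card).choose (v - S.card) : ℝ) else 0) * pex B n S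
              = (if k ≤ v then ((B - k).choose (v - k) : ℝ) else 0) * pex B n S := by
          intro S hS
          rw [Finset.mem_filter] at hS
          rw [hS.2]
        rw [Finset.sum_congr rfl h1, ← Finset.mul_sum, pmu_eq_sum_pex,
          powersetCard_univ_eq_filter]
    _ = ∑ k ∈ Finset.range (v+1), ((B - k).choose (v - k) : ℝ) * pmu B n k := by
        have h2 : ∀ k, (if k ≤ v then ((B - k).choose (v - k) : ℝ) else 0) * pmu B n k
            = if k ≤ v then ((B - k).choose (v - k) : ℝ) * pmu B n k else 0 := by
          intro k
          by_cases h : k ≤ v <;> simp [h]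
        rw [Finset.sum_congr rfl fun k _ => h2 k, ← Finset.sum_filter]
        congr 1
        ext k
        simp only [Finset.mem_filter, Finset.mem_range]
        omega

lemma star' (B n v : ℕ) (hv : v < B) :
    ∑ k ∈ Finset.range (v+1), ((B - k).choose (v - k) : ℝ) * pmu B n k
      = (B.choose v : ℝ) * gg B v ^ n := by
  rw [star B n v (le_of_lt hv)]
  have h1 : ∀ T ∈ Finset.powersetCard v (Finset.univ : Finset (Fin B)),
      (∑ s ∈ T.powerset, wmu B s) ^ n = gg B v ^ n := by
    intro T hT
    rw [Finset.mem_powersetCard_univ] at hT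
    rw [gsum_eq B T (by rw [hT]; exact hv), hT]
  rw [Finset.sum_congr rfl h1, Finset.sum_const, Finset.card_powersetCard,
    Finset.card_univ, Fintype.card_fin, nsmul_eq_mul]

noncomputable def Qf (B n v : ℕ) : ℝ :=
  ∑ j ∈ Finset.range (v+1),
    (-1 : ℝ) ^ (v - j) * (B.choose j) * ((B - j).choose (v - j)) * gg B j ^ n

lemma shift_sum (j v : ℕ) (hj : j ≤ v) (f : ℕ → ℝ) :
    ∑ k ∈ Finset.range (v+1), (if j ≤ k then f k else 0)
      = ∑ i ∈ Finset.range (v - j + 1), f (j + i) := by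
  rw [Finset.range_eq_Ico, ← Finset.sum_Ico_consecutive _ (Nat.zero_le j) (by omega : j ≤ v + 1)]
  have h1 : ∑ k ∈ Finset.Ico 0 j, (if j ≤ k then f k else 0) = 0 := by
    refine Finset.sum_eq_zero fun k hk => ?_
    rw [Finset.mem_Ico] at hk
    rw [if_neg (by omega)]
  have h2 : ∑ k ∈ Finset.Ico j (v+1), (if j ≤ k then f k else 0)
      = ∑ k ∈ Finset.Ico j (v+1), f k := by
    refine Finset.sum_congr rfl fun k hk => ?_
    rw [Finset.mem_Ico] at hk
    rw [if_pos hk.1]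
  rw [h1, h2, zero_add, Finset.sum_Ico_eq_sum_range]
  have he : v + 1 - j = v - j + 1 := by omega
  rw [he, Finset.range_eq_Ico]

lemma alt_sum_real (m : ℕ) :
    ∑ i ∈ Finset.range (m+1), (-1 : ℝ) ^ i * (m.choose i : ℝ)
      = if m = 0 then 1 else 0 := by
  have := Int.alternating_sum_range_choose (n := m)
  have h2 : ((∑ i ∈ Finset.range (m+1), ((-1) ^ i * m.choose i : ℤ) : ℤ) : ℝ)
      = ∑ i ∈ Finset.range (m+1), (-1 : ℝ) ^ i * (m.choose i : ℝ) := by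
    push_cast
    exact Finset.sum_congr rfl fun i _ => by ring
  rw [← h2, this]
  by_cases h : m = 0 <;> simp [h]

lemma forward (B n v : ℕ) (hv : v ≤ B) :
    ∑ k ∈ Finset.range (v+1), ((B - k).choose (v - k) : ℝ) * Qf B n k
      = (B.choose v : ℝ) * gg B v ^ n := by
  unfold Qf
  calc ∑ k ∈ Finset.range (v+1), ((B - k).choose (v - k) : ℝ) *
        ∑ j ∈ Finset.range (k+1),
          (-1 : ℝ) ^ (k - j) * (B.choose j) * ((B - j).choose (k - j)) * gg B j ^ n
      = ∑ k ∈ Finset.range (v+1), ∑ j ∈ Finset.range (v+1),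
          (if j ≤ k then ((B - k).choose (v - k) : ℝ) *
            ((-1 : ℝ) ^ (k - j) * (B.choose j) * ((B - j).choose (k - j)) * gg B j ^ n)
           else 0) := by
        refine Finset.sum_congr rfl fun k hk => ?_
        rw [Finset.mem_range, Nat.lt_succ_iff] at hk
        rw [Finset.mul_sum]
        rw [show Finset.range (k+1)
            = (Finset.range (v+1)).filter (fun j => j ≤ k) from by
          ext j; simp only [Finset.mem_range, Finset.mem_filter]; omega]
        rw [Finset.sum_filter]
    _ = ∑ j ∈ Finset.range (v+1), ∑ k ∈ Finset.range (v+1),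
          (if j ≤ k then ((B - k).choose (v - k) : ℝ) *
            ((-1 : ℝ) ^ (k - j) * (B.choose j) * ((B - j).choose (k - j)) * gg B j ^ n)
           else 0) := Finset.sum_comm
    _ = ∑ j ∈ Finset.range (v+1),
          (if j = v then ((B.choose v : ℝ)) * gg B v ^ n else 0) := by
        refine Finset.sum_congr rfl fun j hj => ?_
        rw [Finset.mem_range, Nat.lt_succ_iff] at hj
        rw [shift_sum j v hj]
        have hterm : ∀ i ∈ Finset.range (v - j + 1),
            ((B - (j+i)).choose (v - (j+i)) : ℝ) *
              ((-1 : ℝ) ^ ((j+i) - j) * (B.choose j) * ((B - j).choose ((j+i) - j))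
                * gg B j ^ n)
            = ((B.choose j : ℝ) * gg B j ^ n * ((B - j).choose (v - j) : ℝ)) *
                ((-1 : ℝ) ^ i * ((v - j).choose i : ℝ)) := by
          intro i hi
          rw [Finset.mem_range, Nat.lt_succ_iff] at hi
          have e1 : (j + i) - j = i := by omega
          have e2 : B - (j + i) = (B - j) - i := by omega
          have e3 : v - (j + i) = (v - j) - i := by omega
          rw [e1, e2, e3]
          have hnat : (B - j).choose (v - j) * (v - j).choose i
              = (B - j).choose i * ((B - j) - i).choose ((v - j) - i) :=
            Nat.choose_mul hi
          have hnatR : ((B - j).choose (v - j) : ℝ) * ((v - j).choose i : ℝ)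
              = ((B - j).choose i : ℝ) * (((B - j) - i).choose ((v - j) - i) : ℝ) := by
            exact_mod_cast hnat
          linear_combination (-((-1:ℝ)^i) * (B.choose j : ℝ) * gg B j ^ n) * hnatR
        rw [Finset.sum_congr rfl hterm, ← Finset.mul_sum, alt_sum_real (v - j)]
        by_cases h : j = v
        · subst h
          simp
        · rw [if_neg (by omega), if_neg h, mul_zero]
    _ = (B.choose v : ℝ) * gg B v ^ n := by
        rw [Finset.sum_ite_eq' (Finset.range (v+1)) v
          (fun _ => (B.choose v : ℝ) * gg B v ^ n)]
        rw [if_pos (by simp)]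

lemma pmu_eq_Q (B n : ℕ) : ∀ v, v < B → pmu B n v = Qf B n v := by
  intro v
  induction v using Nat.strong_induction_on with
  | _ v ih =>
    intro hv
    have h1 := star' B n v hv
    have h2 := forward B n v (le_of_lt hv)
    rw [Finset.sum_range_succ] at h1 h2
    simp only [Nat.sub_self, Nat.choose_zero_right, Nat.cast_one, one_mul] at h1 h2
    have h3 : ∑ k ∈ Finset.range v, ((B - k).choose (v - k) : ℝ) * pmu B n k
        = ∑ k ∈ Finset.range v, ((B - k).choose (v - k) : ℝ) * Qf B n k := by
      refine Finset.sum_congr rfl fun k hk => ?_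
      rw [Finset.mem_range] at hk
      rw [ih k hk (lt_trans hk hv)]
    linarith

lemma key (B w j : ℕ) (hj : j ≤ w) (hw : w + 1 ≤ B) :
    ((B - j).choose (w + 1 - j) : ℝ) * (gg B (w+1) - gg B j)
      = ((B - j).choose (w - j) : ℝ) * gg B j := by
  have hB : 0 < B := by omega
  have hBR : (0:ℝ) < B := by exact_mod_cast hB
  have hBw : (0:ℝ) < (B:ℝ) - w := by
    have : (w:ℝ) < B := by exact_mod_cast (by omega : w < B)
    linarith
  have hBj : (0:ℝ) < (B:ℝ) + 1 - j := by
    have : (j:ℝ) ≤ B := by exact_mod_cast (by omega : j ≤ B)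
    linarith
  have hnat := Nat.choose_succ_right_eq (B - j) (w - j)
  have he1 : w - j + 1 = w + 1 - j := by omega
  have he2 : B - j - (w - j) = B - w := by omega
  rw [he1, he2] at hnat
  have hR : ((B - j).choose (w + 1 - j) : ℝ) * ((w:ℝ) - j + 1)
      = ((B - j).choose (w - j) : ℝ) * ((B:ℝ) - w) := by
    have := congrArg (Nat.cast : ℕ → ℝ) hnat
    push_cast [Nat.cast_sub (by omega : j ≤ w), Nat.cast_sub (by omega : w ≤ B),
      Nat.cast_sub (by omega : j ≤ w + 1)] at this
    linarith
  have hg : gg B (w+1) - gg B j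
      = ((w:ℝ) - j + 1) * (((B:ℝ)+1) / ((B:ℝ) * ((B:ℝ) - w) * ((B:ℝ) + 1 - j))) := by
    unfold gg
    push_cast
    field_simp [hBw.ne']
    ring
  have hgj : gg B j = ((B:ℝ) - w) * (((B:ℝ)+1) / ((B:ℝ) * ((B:ℝ) - w) * ((B:ℝ) + 1 - j))) := by
    unfold gg
    field_simp
  rw [hg, hgj, ← mul_assoc, hR, mul_assoc]

lemma Q_rec (B m w : ℕ) (hw : w + 1 ≤ B) :
    Qf B (m+1) (w+1) = Qf B (m+1) w + gg B (w+1) * Qf B m (w+1) := by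
  have main : Qf B (m+1) (w+1) - gg B (w+1) * Qf B m (w+1) = Qf B (m+1) w := by
    unfold Qf
    rw [Finset.mul_sum, ← Finset.sum_sub_distrib, Finset.sum_range_succ]
    have hlast : (-1 : ℝ) ^ (w + 1 - (w+1)) * (B.choose (w+1)) *
          ((B - (w+1)).choose (w + 1 - (w+1))) * gg B (w+1) ^ (m+1)
        - gg B (w+1) * ((-1 : ℝ) ^ (w + 1 - (w+1)) * (B.choose (w+1)) *
          ((B - (w+1)).choose (w + 1 - (w+1))) * gg B (w+1) ^ m) = 0 := by
      simp only [Nat.sub_self, pow_zero, Nat.choose_zero_right, Nat.cast_one]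
      ring
    rw [hlast, add_zero]
    refine Finset.sum_congr rfl fun j hj => ?_
    rw [Finset.mem_range, Nat.lt_succ_iff] at hj
    have kk := key B w j hj hw
    have he1 : w + 1 - j = (w - j) + 1 := by omega
    rw [he1] at kk ⊢
    rw [pow_succ]
    linear_combination ((-1:ℝ)) ^ (w - j) * (B.choose j : ℝ) * gg B j ^ m * kk
  linarith

lemma wmu_total (B : ℕ) (hB : 1 ≤ B) : ∑ s : Finset (Fin B), wmu B s = 1 := by
  have hBR : (0:ℝ) < B := by exact_mod_cast hB
  have h0 : ∑ s : Finset (Fin B), wmu B s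
      = ∑ s ∈ (Finset.univ : Finset (Fin B)).powerset,
          (if s.card < B then 1 / ((B:ℝ) * (B.choose s.card)) else 0) := by
    rw [Finset.powerset_univ]
    rfl
  rw [h0, Finset.sum_powerset_apply_card
      (fun m => if m < B then 1 / ((B:ℝ) * (B.choose m)) else 0),
    Finset.card_univ, Fintype.card_fin, Finset.sum_range_succ]
  simp only [lt_irrefl, if_neg, if_false, smul_zero, add_zero]
  have h1 : ∀ m ∈ Finset.range B,
      B.choose m • (if m < B then 1 / ((B:ℝ) * (B.choose m)) else 0) = 1 / B := by
    intro m hm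
    rw [Finset.mem_range] at hm
    have hc : (0:ℝ) < (B.choose m : ℝ) := by exact_mod_cast Nat.choose_pos (le_of_lt hm)
    rw [if_pos hm, nsmul_eq_mul]
    field_simp
  rw [Finset.sum_congr rfl h1, Finset.sum_const, Finset.card_range, nsmul_eq_mul]
  field_simp

lemma prod_total (B n : ℕ) (hB : 1 ≤ B) :
    ∑ f : Fin n → Finset (Fin B), ∏ u, wmu B (f u) = 1 := by
  have h2 := Finset.prod_univ_sum (fun _ : Fin n => (Finset.univ : Finset (Finset (Fin B))))
      (fun _ s => wmu B s)
  rw [Fintype.piFinset_univ] at h2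
  rw [← h2, Finset.prod_congr rfl fun u _ => wmu_total B hB, Finset.prod_const, one_pow]

lemma pmu_total (B n : ℕ) (hB : 1 ≤ B) :
    ∑ v ∈ Finset.range (B+1), pmu B n v = 1 := by
  unfold pmu
  rw [Finset.sum_comm]
  have h1 : ∀ f : Fin n → Finset (Fin B),
      (∑ v ∈ Finset.range (B+1),
        if (Finset.univ.biUnion f).card = v then ∏ u, wmu B (f u) else 0)
      = ∏ u, wmu B (f u) := by
    intro f
    rw [Finset.sum_ite_eq (Finset.range (B+1)) ((Finset.univ.biUnion f).card)
      (fun _ => ∏ u, wmu B (f u))]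
    rw [if_pos]
    rw [Finset.mem_range, Nat.lt_succ_iff]
    have := Finset.card_le_univ (Finset.univ.biUnion f)
    simpa using this
  rw [Finset.sum_congr rfl fun f _ => h1 f, prod_total B n hB]


/-- for `B ≥ 1` and `n ≥ 1`: `p_n(0) = B⁻ⁿ`; for `0 < v < B`,
`p_n(v) = p_n(v-1) + p_{n-1}(v) (B+1)/(B(B-v+1))`; and
`p_n(B) = 1 - ∑_{v=0}^{B-1} p_n(v)`. -/
theorem stmt1 (B : ℕ) (hB : 1 ≤ B) (n : ℕ) (hn : 1 ≤ n) :
    pmu B n 0 = 1 / (B : ℝ) ^ n ∧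
    (∀ v : ℕ, 0 < v → v < B →
      pmu B n v = pmu B n (v - 1) +
        pmu B (n - 1) v * ((B : ℝ) + 1) / ((B : ℝ) * ((B : ℝ) - v + 1))) ∧
    pmu B n B = 1 - ∑ v ∈ Finset.range B, pmu B n v := by
  have hBR : (0:ℝ) < B := by exact_mod_cast hB
  refine ⟨?_, ?_, ?_⟩
  · rw [pmu_eq_Q B n 0 (by omega), Qf]
    rw [Finset.sum_range_one]
    simp only [Nat.sub_zero, Nat.choose_zero_right, Nat.cast_one, pow_zero, one_mul, mul_one]
    have hg0 : gg B 0 = 1 / (B:ℝ) := by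
      unfold gg
      rw [Nat.cast_zero, sub_zero]
      field_simp
    rw [hg0, div_pow, one_pow]
  · intro v hv0 hvB
    obtain ⟨w, rfl⟩ : ∃ w, v = w + 1 := ⟨v - 1, by omega⟩
    obtain ⟨m, rfl⟩ : ∃ m, n = m + 1 := ⟨n - 1, by omega⟩
    have hw1 : w + 1 ≤ B := le_of_lt hvB
    rw [pmu_eq_Q B (m+1) (w+1) hvB, pmu_eq_Q B (m+1) (w+1-1) (by omega),
      pmu_eq_Q B (m+1-1) (w+1) hvB]
    have e1 : w + 1 - 1 = w := rfl
    have e2 : m + 1 - 1 = m := rfl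
    rw [e1, e2, Q_rec B m w hw1]
    have e3 : gg B (w+1) * Qf B m (w+1)
        = Qf B m (w+1) * ((B:ℝ) + 1) / ((B:ℝ) * ((B:ℝ) - (↑(w+1)) + 1)) := by
      unfold gg
      push_cast
      ring_nf
    rw [e3]
  · have htot := pmu_total B n hB
    rw [Finset.sum_range_succ] at htot
    linarith
end

section
/- Fix an integer B ≥ 1. For every n ≥ 1 and every 0 < v < B, the probability that exactly v blocks are collectively held by n independent peers satisfies p_n(v) = ∑_{k=0}^{v} p_{n−1}(k) · (B+1)/(B·(B−k+1)); in particular, for 0 < v < B the right-hand side does not depend on v. -/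
lemma choose_recip (N j : ℕ) (hj : j < N) :
    (1:ℝ)/(N.choose j) + 1/(N.choose (j+1)) = ((N:ℝ)+1)/((N:ℝ) * ((N-1).choose j)) := by
  have hN : 1 ≤ N := by omega
  have h1 : (N:ℝ) * ((N-1).choose j) = (N.choose (j+1)) * ((j:ℝ)+1) := by
    have h := Nat.add_one_mul_choose_eq (N-1) j
    have e : N - 1 + 1 = N := by omega
    rw [e] at h
    exact_mod_cast congrArg (fun x : ℕ => (x:ℝ)) h
  have h2 : ((N-1).choose j : ℝ) * N = (N.choose j) * ((N:ℝ) - j) := by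
    have h := Nat.choose_mul_succ_eq (N-1) j
    rw [Nat.sub_add_cancel hN] at h
    have h' := congrArg (fun x : ℕ => (x:ℝ)) h
    push_cast [Nat.cast_sub hj.le] at h'
    linarith [h']
  have pa : (0:ℝ) < N.choose j := by exact_mod_cast Nat.choose_pos hj.le
  have pb : (0:ℝ) < N.choose (j+1) := by exact_mod_cast Nat.choose_pos hj
  have pc : (0:ℝ) < (N-1).choose j := by exact_mod_cast Nat.choose_pos (by omega)
  have pN : (0:ℝ) < N := by exact_mod_cast hN
  field_simp
  linear_combination (↑(N.choose j) : ℝ) * h1 + (↑(N.choose (j+1)) : ℝ) * h2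

lemma Aid (B : ℕ) : ∀ k j : ℕ, k + j ≤ B →
    ∑ m ∈ Finset.range (k+1), ((k.choose m : ℝ) / (B.choose (m+j)))
      = ((B:ℝ)+1)/((((B-k : ℕ):ℝ) + 1) * ((B-k).choose j)) := by
  intro k
  induction k with
  | zero =>
    intro j hj
    have hb : (0:ℝ) < B.choose j := by exact_mod_cast Nat.choose_pos (by omega)
    simp only [Nat.sub_zero, Finset.sum_range_one, Nat.choose_self, Nat.cast_one, zero_add]
    field_simp
  | succ k ih =>
    intro j hj
    have step : ∑ m ∈ Finset.range (k+2), (((k+1).choose m : ℝ)/(B.choose (m+j)))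
        = (∑ m ∈ Finset.range (k+1), ((k.choose m:ℝ)/(B.choose (m+j))))
        + ∑ m ∈ Finset.range (k+1), ((k.choose m:ℝ)/(B.choose (m+(j+1)))) := by
      rw [Finset.sum_range_succ' (fun m => (((k+1).choose m : ℝ)/(B.choose (m+j)))) (k+1)]
      have e1 : ∀ m : ℕ, (((k+1).choose (m+1) : ℝ)/(B.choose (m+1+j)))
          = (k.choose m : ℝ)/(B.choose (m+(j+1))) + (k.choose (m+1) : ℝ)/(B.choose ((m+1)+j)) := by
        intro m
        have e : m + (j+1) = m+1+j := by omega
        rw [Nat.choose_succ_succ, e]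
        push_cast
        rw [add_div]
      simp only [e1]
      rw [Finset.sum_add_distrib]
      have e2 : ∑ m ∈ Finset.range (k+1), ((k.choose (m+1) : ℝ)/(B.choose ((m+1)+j)))
          + ((k.choose 0 : ℝ)/(B.choose (0+j)))
          = ∑ m ∈ Finset.range (k+1), ((k.choose m:ℝ)/(B.choose (m+j))) := by
        rw [← Finset.sum_range_succ' (fun m => ((k.choose m : ℝ)/(B.choose (m+j)))) (k+1)]
        rw [Finset.sum_range_succ]
        simp [Nat.choose_succ_self]
      simp only [Nat.choose_zero_right] at e2 ⊢
      linarith [e2]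
    rw [step, ih j (by omega), ih (j+1) (by omega)]
    have hN : 1 ≤ B - k := by omega
    have hjN : j < B - k := by omega
    have hcr := choose_recip (B-k) j hjN
    have eN : B - (k+1) = (B - k) - 1 := by omega
    rw [eN]
    set N := B - k with hNdef
    have pN : (0:ℝ) < N := by exact_mod_cast hN
    have pa : (0:ℝ) < N.choose j := by exact_mod_cast Nat.choose_pos hjN.le
    have pb : (0:ℝ) < N.choose (j+1) := by exact_mod_cast Nat.choose_pos hjN
    have pc : (0:ℝ) < (N-1).choose j := by exact_mod_cast Nat.choose_pos (by omega)
    have eN1 : ((N-1 : ℕ):ℝ) + 1 = (N:ℝ) := by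
      have h : ((N-1:ℕ):ℝ) = (N:ℝ) - 1 := by push_cast [Nat.cast_sub hN]; ring
      rw [h]; ring
    rw [eN1]
    have e3 : ∀ x:ℝ, ((B:ℝ)+1)/(((N:ℝ))+1) * (1/x) = ((B:ℝ)+1)/(((N:ℝ)+1)*x) := by
      intro x; rw [div_mul_div_comm, mul_one]
    rw [← e3, ← e3, ← mul_add, hcr, div_mul_div_comm]
    rw [mul_comm ((N:ℝ)+1) ((N:ℝ) * ((N-1).choose j))]
    rw [mul_div_mul_right _ _ (by positivity : ((N:ℝ)+1) ≠ 0)]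


lemma key_s2 (B v : ℕ) (hvB : v < B) (U : Finset (Fin B)) (hU : U.card ≤ v) :
    ∑ s : Finset (Fin B), (if (U ∪ s).card = v then wmu B s else 0)
      = ((B:ℝ)+1)/((B:ℝ)*((B:ℝ) - U.card + 1)) := by
  classical
  set k := U.card with hk
  set j := v - k with hjdef
  have hkj : k + j = v := by omega
  have hrec : ∀ a : Finset (Fin B), (a ∩ U) ∪ (a \ U) = a := by
    intro a; ext x; simp; tauto
  have hbij : ∑ s : Finset (Fin B), (if (U ∪ s).card = v then wmu B s else 0)
      = ∑ p ∈ U.powerset ×ˢ Uᶜ.powerset,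
          (if (U ∪ (p.1 ∪ p.2)).card = v then wmu B (p.1 ∪ p.2) else 0) := by
    apply Finset.sum_nbij' (fun s => (s ∩ U, s \ U)) (fun p => p.1 ∪ p.2)
    · intro a _
      simp only [Finset.mem_product, Finset.mem_powerset]
      refine ⟨Finset.inter_subset_right, ?_⟩
      intro x hx
      simp only [Finset.mem_sdiff] at hx
      simp [Finset.mem_compl, hx.2]
    · intro p _; exact Finset.mem_univ _
    · intro a _; exact hrec a
    · intro p hp
      simp only [Finset.mem_product, Finset.mem_powerset] at hp
      obtain ⟨h1, h2⟩ := hp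
      have h2' : ∀ x ∈ p.2, x ∉ U := by
        intro x hx; have := h2 hx; simpa [Finset.mem_compl] using this
      refine Prod.ext ?_ ?_
      · ext x
        simp only [Finset.mem_inter, Finset.mem_union]
        constructor
        · rintro ⟨h | h, hU'⟩
          · exact h
          · exact absurd hU' (h2' _ h)
        · intro h; exact ⟨Or.inl h, h1 h⟩
      · ext x
        simp only [Finset.mem_sdiff, Finset.mem_union]
        constructor
        · rintro ⟨h | h, hU'⟩
          · exact absurd (h1 h) hU'
          · exact h
        · intro h; exact ⟨Or.inr h, h2' _ h⟩
    · intro a _; rw [hrec a]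
  rw [hbij, Finset.sum_product]
  have hinner : ∀ a ∈ U.powerset, ∀ b ∈ Uᶜ.powerset,
      (if (U ∪ (a ∪ b)).card = v then wmu B (a ∪ b) else 0)
      = (if b.card = j then (1:ℝ)/(B * (B.choose (a.card + j))) else 0) := by
    intro a ha b hb
    rw [Finset.mem_powerset] at ha hb
    have hb' : ∀ x ∈ b, x ∉ U := by
      intro x hx; have := hb hx; simpa [Finset.mem_compl] using this
    have hUb : Disjoint U b := Finset.disjoint_right.mpr hb'
    have hab : Disjoint a b := Finset.disjoint_right.mpr (fun x hx => fun hxa => hb' x hx (ha hxa))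
    have hUab : U ∪ (a ∪ b) = U ∪ b := by
      rw [← Finset.union_assoc, Finset.union_eq_left.mpr ha]
    rw [hUab, Finset.card_union_of_disjoint hUb]
    have hcab : (a ∪ b).card = a.card + b.card := Finset.card_union_of_disjoint hab
    by_cases hbj : b.card = j
    · rw [if_pos (by omega), if_pos hbj]
      rw [wmu, hcab, hbj, if_pos]
      have hak : a.card ≤ k := Finset.card_le_card ha
      omega
    · rw [if_neg (by omega), if_neg hbj]
  rw [Finset.sum_congr rfl (fun a ha => Finset.sum_congr rfl (fun b hb => hinner a ha b hb))]
  have hcompl : Uᶜ.card = B - k := by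
    rw [Finset.card_compl, Fintype.card_fin]
  have hin2 : ∀ a ∈ U.powerset,
      ∑ b ∈ Uᶜ.powerset, (if b.card = j then (1:ℝ)/(B * (B.choose (a.card + j))) else 0)
      = ((B-k).choose j : ℝ) * (1/(B * (B.choose (a.card + j)))) := by
    intro a _
    rw [← Finset.sum_filter, ← Finset.powersetCard_eq_filter, Finset.sum_const,
      Finset.card_powersetCard, hcompl, nsmul_eq_mul]
  rw [Finset.sum_congr rfl hin2]
  rw [Finset.sum_powerset]
  have hin3 : ∀ m ∈ Finset.range (U.card + 1),
      ∑ a ∈ Finset.powersetCard m U, ((B-k).choose j : ℝ) * (1/(B * (B.choose (a.card + j))))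
      = (k.choose m : ℝ) * (((B-k).choose j : ℝ) * (1/(B * (B.choose (m + j))))) := by
    intro m _
    rw [Finset.sum_congr rfl (fun a ha => by
      rw [(Finset.mem_powersetCard.mp ha).2])]
    rw [Finset.sum_const, Finset.card_powersetCard, nsmul_eq_mul]
  rw [Finset.sum_congr rfl hin3]
  -- now: ∑ m ∈ range (k+1), C(k,m) * (C(B-k,j) * (1/(B*C(B,m+j)))) = target
  have hAid := Aid B k j (by omega)
  have hfac : ∀ m : ℕ, (k.choose m : ℝ) * (((B-k).choose j : ℝ) * (1/(B * (B.choose (m + j)))))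
      = (((B-k).choose j : ℝ)/B) * ((k.choose m : ℝ)/(B.choose (m+j))) := by
    intro m
    have hc : (0:ℝ) < B.choose (m+j) ∨ True := Or.inr trivial
    field_simp
  simp only [hfac]
  rw [← Finset.mul_sum, hAid]
  have hBk : ((B-k:ℕ):ℝ) = (B:ℝ) - k := by
    push_cast [Nat.cast_sub (by omega : k ≤ B)]; ring
  rw [hBk]
  have p1 : (0:ℝ) < (B-k).choose j := by
    exact_mod_cast Nat.choose_pos (by omega : j ≤ B - k)
  have p2 : (0:ℝ) < B := by exact_mod_cast (by omega : 0 < B)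
  have p3 : (0:ℝ) < (B:ℝ) - k + 1 := by
    have : (k:ℝ) ≤ B := by exact_mod_cast (by omega : k ≤ B)
    linarith
  field_simp


lemma key0 (B v : ℕ) (U : Finset (Fin B)) (hU : v < U.card) :
    ∑ s : Finset (Fin B), (if (U ∪ s).card = v then wmu B s else 0) = 0 := by
  apply Finset.sum_eq_zero
  intro s _
  rw [if_neg]
  intro h
  have h2 := Finset.card_le_card (Finset.subset_union_left (s₁ := U) (s₂ := s))
  omega

/-- for `B ≥ 1`, `n ≥ 1` and `0 < v < B`,
`p_n(v) = ∑_{k=0}^{v} p_{n-1}(k) (B+1)/(B(B-k+1))`; the coefficient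
`(B+1)/(B(B-k+1))` of `p_{n-1}(k)` does not depend on `v`. -/
theorem stmt2 (B n v : ℕ) (hB : 1 ≤ B) (hn : 1 ≤ n) (hv0 : 0 < v) (hvB : v < B) :
    pmu B n v = ∑ k ∈ Finset.range (v + 1),
      pmu B (n - 1) k * ((B : ℝ) + 1) / ((B : ℝ) * ((B : ℝ) - k + 1)) := by
  classical
  obtain ⟨m, rfl⟩ : ∃ m, n = m + 1 := ⟨n - 1, by omega⟩
  simp only [Nat.add_sub_cancel]
  set c : ℕ → ℝ := fun k => ((B:ℝ)+1)/((B:ℝ)*((B:ℝ)-k+1)) with hc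
  set F : ℕ → ℝ := fun k => if k ≤ v then c k else 0 with hF
  have hcons_union : ∀ (s : Finset (Fin B)) (g : Fin m → Finset (Fin B)),
      Finset.univ.biUnion (Fin.cons s g) = s ∪ Finset.univ.biUnion g := by
    intro s g
    ext x
    simp only [Finset.mem_biUnion, Finset.mem_union, Finset.mem_univ, true_and]
    constructor
    · rintro ⟨i, hi⟩
      rcases Fin.eq_zero_or_eq_succ i with h0 | ⟨i', rfl⟩
      · subst h0; rw [Fin.cons_zero] at hi; exact Or.inl hi
      · rw [Fin.cons_succ] at hi; exact Or.inr ⟨i', hi⟩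
    · rintro (h | ⟨i, hi⟩)
      · exact ⟨0, by rwa [Fin.cons_zero]⟩
      · exact ⟨i.succ, by rwa [Fin.cons_succ]⟩
  have step1 : pmu B (m+1) v
      = ∑ g : Fin m → Finset (Fin B), (∏ i, wmu B (g i)) *
          (∑ s : Finset (Fin B),
            (if ((Finset.univ.biUnion g) ∪ s).card = v then wmu B s else 0)) := by
    rw [pmu]
    rw [← Equiv.sum_comp (Fin.consEquiv (fun _ : Fin (m+1) => Finset (Fin B)))
      (fun f => if (Finset.univ.biUnion f).card = v then ∏ u, wmu B (f u) else 0)]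
    rw [Fintype.sum_prod_type]
    rw [Finset.sum_comm]
    apply Finset.sum_congr rfl
    intro g _
    rw [Finset.mul_sum]
    apply Finset.sum_congr rfl
    intro s _
    have e : Fin.consEquiv (fun _ : Fin (m+1) => Finset (Fin B)) (s, g) = Fin.cons s g := rfl
    rw [e, hcons_union s g, Fin.prod_univ_succ]
    simp only [Fin.cons_zero, Fin.cons_succ]
    rw [Finset.union_comm s _]
    split_ifs with h
    · ring
    · ring
  have step2 : ∀ g : Fin m → Finset (Fin B),
      (∑ s : Finset (Fin B),
        (if ((Finset.univ.biUnion g) ∪ s).card = v then wmu B s else 0))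
      = F ((Finset.univ.biUnion g).card) := by
    intro g
    by_cases h : (Finset.univ.biUnion g).card ≤ v
    · rw [key_s2 B v hvB _ h]; simp [hF, hc, h]
    · rw [key0 B v _ (by omega)]; simp [hF, hc, h]
  simp only [step2] at step1
  have hcard : ∀ g : Fin m → Finset (Fin B), (Finset.univ.biUnion g).card ∈ Finset.range (B+1) := by
    intro g
    rw [Finset.mem_range]
    have := Finset.card_le_univ (Finset.univ.biUnion g)
    simp only [Finset.card_univ, Fintype.card_fin] at this
    omega
  have step3 : ∀ g : Fin m → Finset (Fin B),
      (∏ i, wmu B (g i)) * F ((Finset.univ.biUnion g).card)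
      = ∑ k ∈ Finset.range (B+1),
          (if (Finset.univ.biUnion g).card = k then ∏ i, wmu B (g i) else 0) * F k := by
    intro g
    rw [Finset.sum_eq_single ((Finset.univ.biUnion g).card)]
    · rw [if_pos rfl]
    · intro b _ hb
      rw [if_neg (fun h => hb h.symm), zero_mul]
    · intro h; exact absurd (hcard g) h
  simp only [step3] at step1
  rw [Finset.sum_comm] at step1
  have step4 : ∀ k ∈ Finset.range (B+1),
      (∑ g : Fin m → Finset (Fin B),
        (if (Finset.univ.biUnion g).card = k then ∏ i, wmu B (g i) else 0) * F k)
      = pmu B m k * F k := by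
    intro k _
    rw [← Finset.sum_mul, pmu]
  rw [Finset.sum_congr rfl step4] at step1
  rw [step1]
  rw [← Finset.sum_subset (Finset.range_subset_range.mpr (by omega : v + 1 ≤ B + 1))]
  · apply Finset.sum_congr rfl
    intro k hk
    rw [Finset.mem_range] at hk
    have hkv : k ≤ v := by omega
    simp only [hF, hc, if_pos hkv, mul_div_assoc]
  · intro k _ hk
    rw [Finset.mem_range, not_lt] at hk
    simp only [hF, if_neg (by omega : ¬ k ≤ v), mul_zero]
end

section
/- For all integers B ≥ 1 and 0 ≤ k ≤ v ≤ B, the full sum satisfies ∑_{h=0}^{B} ψ_h(k,v) = (B+1)/(B−k+1); consequently ∑_{h=0}^{B−1} ψ_h(k,v) = (B+1)/(B−k+1) when v ≤ B−1, and ∑_{h=0}^{B−1} ψ_h(k,B) = k/(B−k+1) when v = B. -/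
lemma nat_key (N r : ℕ) (h : r < N) :
    N * ((N - 1).choose r) * (N.choose r + N.choose (r + 1)) =
      (N + 1) * (N.choose r * N.choose (r + 1)) := by
  have hN : N - 1 + 1 = N := by omega
  have h1 : N * ((N - 1).choose r) = N.choose (r + 1) * (r + 1) := by
    have := Nat.add_one_mul_choose_eq (N - 1) r
    simp only [Nat.succ_eq_add_one, hN] at this
    omega
  have h2 : N.choose r + N.choose (r + 1) = (N + 1).choose (r + 1) :=
    (Nat.choose_succ_succ N r).symm
  have h3 : (N + 1).choose (r + 1) * (r + 1) = (N + 1) * N.choose r := by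
    have := Nat.add_one_mul_choose_eq N r
    omega
  rw [h1, h2]
  calc N.choose (r + 1) * (r + 1) * (N + 1).choose (r + 1)
      = ((N + 1).choose (r + 1) * (r + 1)) * N.choose (r + 1) := by ring
    _ = (N + 1) * N.choose r * N.choose (r + 1) := by rw [h3]
    _ = (N + 1) * (N.choose r * N.choose (r + 1)) := by ring

lemma aux_real (N r : ℕ) (h : r < N) :
    (1 : ℝ) / (N.choose r) + 1 / (N.choose (r + 1)) =
      ((N : ℝ) + 1) / ((N : ℝ) * ((N - 1).choose r)) := by
  have p1 : (0:ℝ) < N.choose r := by exact_mod_cast Nat.choose_pos (by omega)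
  have p2 : (0:ℝ) < N.choose (r + 1) := by exact_mod_cast Nat.choose_pos (by omega)
  have p3 : (0:ℝ) < (N - 1).choose r := by exact_mod_cast Nat.choose_pos (by omega)
  have p4 : (0:ℝ) < (N:ℝ) := by exact_mod_cast h.trans_le' (Nat.zero_le r)
  have key := congrArg (Nat.cast : ℕ → ℝ) (nat_key N r h)
  push_cast at key
  field_simp
  nlinarith [key]

lemma pascal_sum (m : ℕ) (f : ℕ → ℝ) :
    ∑ j ∈ Finset.range (m + 2), ((m + 1).choose j : ℝ) * f j =
      ∑ j ∈ Finset.range (m + 1), (m.choose j : ℝ) * f j +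
        ∑ j ∈ Finset.range (m + 1), (m.choose j : ℝ) * f (j + 1) := by
  rw [Finset.sum_range_succ' (fun j => ((m + 1).choose j : ℝ) * f j) (m + 1)]
  simp only [Nat.choose_succ_succ, Nat.choose_zero_right]
  push_cast
  rw [Finset.sum_congr rfl (fun j _ => add_mul ((m.choose j : ℝ)) (m.choose (j+1)) (f (j+1))),
    Finset.sum_add_distrib]
  have : ∑ j ∈ Finset.range (m + 1), (m.choose (j + 1) : ℝ) * f (j + 1)
      = ∑ j ∈ Finset.range (m + 1), (m.choose j : ℝ) * f j - f 0 := by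
    have h2 := Finset.sum_range_succ' (fun j => (m.choose j : ℝ) * f j) (m + 1)
    rw [Finset.sum_range_succ] at h2
    simp only [Nat.choose_succ_self, Nat.cast_zero, zero_mul, add_zero,
      Nat.choose_zero_right, Nat.cast_one, one_mul] at h2
    linarith
  rw [this]
  ring

lemma sum_inv_choose (n : ℕ) : ∀ m r : ℕ, m + r ≤ n →
    ∑ j ∈ Finset.range (m + 1), (m.choose j : ℝ) * (1 / (n.choose (r + j))) =
      ((n : ℝ) + 1) / ((((n - m : ℕ) : ℝ) + 1) * ((n - m).choose r)) := by
  intro m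
  induction m with
  | zero =>
    intro r hr
    simp only [Nat.zero_eq, zero_add, Finset.sum_range_one, Nat.choose_zero_right, Nat.cast_one,
      one_mul, add_zero, Nat.sub_zero]
    have p1 : (0:ℝ) < n.choose r := by exact_mod_cast Nat.choose_pos (by omega)
    field_simp
  | succ m ih =>
    intro r hr
    have e := pascal_sum m (fun j => 1 / (n.choose (r + j)))
    rw [show m + 1 + 1 = m + 2 from rfl, e]
    have h1 := ih r (by omega)
    have h2 := ih (r + 1) (by omega)
    rw [h1]
    have : ∑ j ∈ Finset.range (m + 1), (m.choose j : ℝ) * (1 / (n.choose (r + (j + 1)))) =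
        ∑ j ∈ Finset.range (m + 1), (m.choose j : ℝ) * (1 / (n.choose ((r + 1) + j))) := by
      apply Finset.sum_congr rfl
      intro j _
      rw [show r + (j + 1) = r + 1 + j from by omega]
    rw [this, h2]
    set N := n - m with hN
    have hrN : r < N := by omega
    have haux := aux_real N r hrN
    have hsub : n - (m + 1) = N - 1 := by omega
    rw [hsub]
    have p1 : (0:ℝ) < N.choose r := by exact_mod_cast Nat.choose_pos (by omega)
    have p2 : (0:ℝ) < N.choose (r + 1) := by exact_mod_cast Nat.choose_pos (by omega)
    have p3 : (0:ℝ) < (N - 1).choose r := by exact_mod_cast Nat.choose_pos (by omega)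
    have p4 : (0:ℝ) < (N:ℝ) := by exact_mod_cast hrN.trans_le' (Nat.zero_le r)
    have hcast : ((N - 1 : ℕ) : ℝ) + 1 = (N : ℝ) := by
      have : N - 1 + 1 = N := by omega
      exact_mod_cast congrArg (Nat.cast : ℕ → ℝ) this
    rw [hcast]
    have expand : ((n:ℝ)+1) / (((N:ℝ)+1) * N.choose r) + ((n:ℝ)+1) / (((N:ℝ)+1) * N.choose (r+1))
        = ((n:ℝ)+1) / ((N:ℝ)+1) * ((1:ℝ) / (N.choose r) + 1 / (N.choose (r+1))) := by
      field_simp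
    rw [expand, haux]
    have pN1 : ((N:ℝ)+1) ≠ 0 := by positivity
    field_simp

lemma full_sum (B k v : ℕ) (hkv : k ≤ v) (hvB : v ≤ B) :
    (∑ h ∈ Finset.range (B + 1), psi B h k v) = ((B : ℝ) + 1) / ((B : ℝ) - k + 1) := by
  set d := v - k with hd
  have hdk : d + k = v := by omega
  rw [Finset.range_eq_Ico, ← Finset.sum_Ico_consecutive _ (Nat.zero_le d)
    (by omega : d ≤ B + 1)]
  have hz : ∑ h ∈ Finset.Ico 0 d, psi B h k v = 0 := by
    apply Finset.sum_eq_zero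
    intro h hh
    simp only [Finset.mem_Ico] at hh
    rw [psi, if_neg]
    rintro ⟨-, h2⟩
    omega
  rw [hz, zero_add, Finset.sum_Ico_eq_sum_range]
  have hterm : ∀ i ∈ Finset.range (B + 1 - d), psi B (d + i) k v =
      ((B - k).choose d : ℝ) * ((k.choose i : ℝ) * (1 / (B.choose (d + i)))) := by
    intro i _
    rw [psi, if_pos ⟨hkv, by omega⟩]
    rw [show d + i + k - v = i from by omega, show v - k = d from rfl]
    ring
  rw [Finset.sum_congr rfl hterm, ← Finset.mul_sum]
  have hsplit : B + 1 - d = (k + 1) + (B - v) := by omega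
  rw [hsplit, Finset.sum_range_add]
  have hz2 : ∑ i ∈ Finset.range (B - v),
      (k.choose (k + 1 + i) : ℝ) * (1 / (B.choose (d + (k + 1 + i)))) = 0 := by
    apply Finset.sum_eq_zero
    intro i _
    rw [Nat.choose_eq_zero_of_lt (by omega)]
    simp
  rw [hz2, add_zero, sum_inv_choose B k d (by omega)]
  have hcast : ((B - k : ℕ) : ℝ) = (B : ℝ) - k := by
    push_cast [Nat.cast_sub (hkv.trans hvB)]; ring
  have hpos : (0 : ℝ) < ((B - k).choose d : ℝ) := by
    exact_mod_cast Nat.choose_pos (by omega)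
  have hpos2 : (0 : ℝ) < ((B - k : ℕ) : ℝ) + 1 := by positivity
  rw [hcast] at *
  field_simp

/-- for `B ≥ 1` and `0 ≤ k ≤ v ≤ B`,
`∑_{h=0}^{B} ψ_h(k,v) = (B+1)/(B-k+1)`; consequently
`∑_{h=0}^{B-1} ψ_h(k,v) = (B+1)/(B-k+1)` when `v ≤ B-1`, and
`∑_{h=0}^{B-1} ψ_h(k,B) = k/(B-k+1)` when `v = B`. -/
theorem stmt3 (B k v : ℕ) (hB : 1 ≤ B) (hkv : k ≤ v) (hvB : v ≤ B) :
    (∑ h ∈ Finset.range (B + 1), psi B h k v) = ((B : ℝ) + 1) / ((B : ℝ) - k + 1) ∧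
    (v ≤ B - 1 →
      (∑ h ∈ Finset.range B, psi B h k v) = ((B : ℝ) + 1) / ((B : ℝ) - k + 1)) ∧
    (v = B →
      (∑ h ∈ Finset.range B, psi B h k B) = (k : ℝ) / ((B : ℝ) - k + 1)) := by
  have hfull := full_sum B k v hkv hvB
  have hsucc := Finset.sum_range_succ (fun h => psi B h k v) B
  refine ⟨hfull, ?_, ?_⟩
  · intro hv
    have hlast : psi B B k v = 0 := by
      rw [psi, if_pos ⟨hkv, by omega⟩, Nat.choose_eq_zero_of_lt (by omega)]
      simp
    simp only [hsucc, hlast, add_zero] at hfull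
    exact hfull
  · intro hv
    subst hv
    have hlast : psi v v k v = 1 := by
      rw [psi, if_pos ⟨hkv, by omega⟩, show v + k - v = k from by omega,
        Nat.choose_self, Nat.choose_self, Nat.choose_self]
      norm_num
    simp only [hsucc, hlast] at hfull
    have hcast : ((v - k : ℕ) : ℝ) = (v : ℝ) - k := by
      push_cast [Nat.cast_sub hkv]; ring
    have hpos2 : (0 : ℝ) < ((v - k : ℕ) : ℝ) + 1 := by positivity
    rw [hcast] at hpos2
    have : (∑ h ∈ Finset.range v, psi v h k v) = ((v:ℝ) + 1) / ((v:ℝ) - k + 1) - 1 := by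
      linarith
    rw [this]
    field_simp
    ring
end

section
/- Fix an integer B ≥ 1. For every n ≥ 1 and every 0 ≤ v ≤ B, the probability that exactly v blocks are collectively held by n independent peers in the γ = μ model is given in closed form by p_n(v;μ) = C(B,v) · ∑_{l=0}^{v} C(v,l) (−1)^l (B−v+l+1)^{−n}. -/
/-- Single-peer block-ownership distribution in the `γ = μ` model: each subset `s`
of `{1, …, B}` has probability `1/((B+1) C(B,|s|))` (a uniform size in `{0, …, B}`,
then a uniform subset of that size). -/
noncomputable def wnu (B : ℕ) (s : Finset (Fin B)) : ℝ :=
  1 / ((B + 1) * (B.choose s.card))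

/-- `pnu B n v` : probability that exactly `v` blocks are collectively held by `n`
independent peers, each with block set drawn from `wnu B`. -/
noncomputable def pnu (B n v : ℕ) : ℝ :=
  ∑ f : Fin n → Finset (Fin B),
    if (Finset.univ.biUnion f).card = v then ∏ u, wnu B (f u) else 0

/-- Telescoping identity: `∑_{k=0}^{t} C(t,k)/C(B,k) = (B+1)/(B+1-t)` for `t ≤ B`. -/
lemma choose_div_sum (B t : ℕ) (ht : t ≤ B) :
    ∑ k ∈ Finset.range (t + 1), (t.choose k : ℝ) / (B.choose k) =
      ((B : ℝ) + 1) / ((B : ℝ) + 1 - t) := by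
  have htR : (t : ℝ) ≤ B := by exact_mod_cast ht
  have hd : ((B : ℝ) + 1 - t) ≠ 0 := by nlinarith
  set u : ℕ → ℝ := fun k =>
    ((B : ℝ) - k + 1) * (t.choose k : ℝ) / (B.choose k) / ((B : ℝ) + 1 - t) with hu
  have hstep : ∀ k ∈ Finset.range (t + 1),
      (t.choose k : ℝ) / (B.choose k) = u k - u (k + 1) := by
    intro k hk
    rw [Finset.mem_range, Nat.lt_succ_iff] at hk
    rcases lt_or_eq_of_le (hk.trans ht) with hkB | hkB
    · -- k < B
      have hkt : k ≤ t := hk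
      have hb0 : (B.choose k : ℝ) ≠ 0 := by
        exact_mod_cast Nat.choose_pos (hkt.trans ht) |>.ne'
      have hb1 : (B.choose (k + 1) : ℝ) ≠ 0 := by
        exact_mod_cast Nat.choose_pos hkB |>.ne'
      have h1 : (t.choose (k + 1) : ℝ) * (k + 1) = (t.choose k : ℝ) * ((t : ℝ) - k) := by
        have h' : ((t.choose (k + 1) : ℝ)) * ((k : ℝ) + 1)
            = (t.choose k : ℝ) * (((t - k : ℕ) : ℕ) : ℝ) := by
          exact_mod_cast congrArg (fun m : ℕ => (m : ℝ)) (Nat.choose_succ_right_eq t k)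
        rw [Nat.cast_sub hkt] at h'
        linarith [h']
      have h2 : (B.choose (k + 1) : ℝ) * (k + 1) = (B.choose k : ℝ) * ((B : ℝ) - k) := by
        have h' : ((B.choose (k + 1) : ℝ)) * ((k : ℝ) + 1)
            = (B.choose k : ℝ) * (((B - k : ℕ) : ℕ) : ℝ) := by
          exact_mod_cast congrArg (fun m : ℕ => (m : ℝ)) (Nat.choose_succ_right_eq B k)
        rw [Nat.cast_sub (hkt.trans ht)] at h'
        linarith [h']
      simp only [hu]
      push_cast
      field_simp
      linear_combination
        ((B.choose (k+1) : ℝ) * h1 - (t.choose (k+1) : ℝ) * h2)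
    · -- k = B, hence t = B, k = t
      have htB : t = B := le_antisymm ht (hkB ▸ hk)
      subst htB
      have hkt : k = t := le_antisymm hk (hkB.symm ▸ le_refl t)
      subst hkt
      simp [hu, Nat.choose_self, Nat.choose_succ_self]
  rw [Finset.sum_congr rfl hstep, Finset.sum_range_sub']
  simp [hu, Nat.choose_succ_self, Nat.choose_zero_right]

/-- Probability that one peer's blocks are contained in `T`: equals `1/(B+1-|T|)`. -/
lemma sum_wnu_powerset (B : ℕ) (T : Finset (Fin B)) :
    ∑ s ∈ T.powerset, wnu B s = 1 / ((B : ℝ) + 1 - T.card) := by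
  have ht : T.card ≤ B := by
    simpa using Finset.card_le_card (Finset.subset_univ T)
  have h0 : ((B : ℝ) + 1) ≠ 0 := by positivity
  calc ∑ s ∈ T.powerset, wnu B s
      = ∑ s ∈ T.powerset, (fun m : ℕ => 1 / (((B : ℝ) + 1) * (B.choose m))) s.card := by
        refine Finset.sum_congr rfl fun s _ => ?_
        simp [wnu]
    _ = ∑ k ∈ Finset.range (T.card + 1),
          (T.card.choose k) • (1 / (((B : ℝ) + 1) * (B.choose k))) :=
        Finset.sum_powerset_apply_card
          (f := fun m : ℕ => 1 / (((B : ℝ) + 1) * (B.choose m)))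
    _ = (1 / ((B : ℝ) + 1)) * ∑ k ∈ Finset.range (T.card + 1),
          (T.card.choose k : ℝ) / (B.choose k) := by
        rw [Finset.mul_sum]
        refine Finset.sum_congr rfl fun k _ => ?_
        rw [nsmul_eq_mul]
        field_simp
    _ = 1 / ((B : ℝ) + 1 - T.card) := by
        rw [choose_div_sum B T.card ht]
        have : ((B : ℝ) + 1 - T.card) ≠ 0 := by
          have : (T.card : ℝ) ≤ B := by exact_mod_cast ht
          nlinarith
        field_simp

/-- Alternating sum over a powerset. -/
lemma alt_sum {α : Type*} [DecidableEq α] (x : Finset α) :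
    ∑ m ∈ x.powerset, (-1 : ℝ) ^ m.card = if x = ∅ then 1 else 0 := by
  have h := Finset.sum_powerset_neg_one_pow_card (x := x)
  have : ((∑ m ∈ x.powerset, (-1 : ℤ) ^ m.card : ℤ) : ℝ)
      = ∑ m ∈ x.powerset, (-1 : ℝ) ^ m.card := by push_cast; rfl
  rw [← this, h]
  split <;> norm_num

/-- Möbius inversion over the subset lattice. -/
lemma mobius {α : Type*} [DecidableEq α] (g : Finset α → ℝ) (T : Finset α) :
    g T = ∑ U ∈ T.powerset, (-1 : ℝ) ^ ((T \ U).card) * ∑ W ∈ U.powerset, g W := by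
  have h1 : ∀ U ∈ T.powerset, ∑ W ∈ U.powerset, g W
      = ∑ W ∈ T.powerset, if W ⊆ U then g W else 0 := by
    intro U hU
    rw [Finset.mem_powerset] at hU
    rw [← Finset.sum_filter]
    refine (Finset.sum_congr ?_ fun _ _ => rfl)
    ext W
    simp only [Finset.mem_powerset, Finset.mem_filter]
    exact ⟨fun h => ⟨h.trans hU, h⟩, fun h => h.2⟩
  rw [Finset.sum_congr rfl fun U hU => by rw [h1 U hU]]
  rw [Finset.sum_congr rfl fun U _ => Finset.mul_sum _ _ _, Finset.sum_comm]
  have h2 : ∀ W ∈ T.powerset,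
      (∑ U ∈ T.powerset, (-1 : ℝ) ^ ((T \ U).card) * if W ⊆ U then g W else 0)
      = if W = T then g W else 0 := by
    intro W hW
    rw [Finset.mem_powerset] at hW
    have hbij : (∑ U ∈ T.powerset, (-1 : ℝ) ^ ((T \ U).card) * if W ⊆ U then g W else 0)
        = ∑ V ∈ T.powerset, (-1 : ℝ) ^ V.card * if W ⊆ T \ V then g W else 0 := by
      refine Finset.sum_nbij' (fun U => T \ U) (fun V => T \ V) ?_ ?_ ?_ ?_ ?_
      · intro U hU; simp [Finset.mem_powerset]
      · intro V hV; simp [Finset.mem_powerset]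
      · intro U hU; rw [Finset.mem_powerset] at hU; exact Finset.sdiff_sdiff_eq_self hU
      · intro V hV; rw [Finset.mem_powerset] at hV; exact Finset.sdiff_sdiff_eq_self hV
      · intro U hU; rw [Finset.mem_powerset] at hU
        rw [Finset.sdiff_sdiff_eq_self hU]
    rw [hbij]
    have h3 : ∀ V ∈ T.powerset, ((-1 : ℝ) ^ V.card * if W ⊆ T \ V then g W else 0)
        = if V ⊆ T \ W then (-1 : ℝ) ^ V.card * g W else 0 := by
      intro V hV
      rw [Finset.mem_powerset] at hV
      have : W ⊆ T \ V ↔ V ⊆ T \ W := by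
        rw [Finset.subset_sdiff, Finset.subset_sdiff]
        exact ⟨fun h => ⟨hV, h.2.symm⟩, fun h => ⟨hW, h.2.symm⟩⟩
      split_ifs with ha hb hb
      · rfl
      · exact absurd (this.mp ha) hb
      · exact absurd (this.mpr hb) ha
      · exact mul_zero _
    rw [Finset.sum_congr rfl h3, ← Finset.sum_filter]
    have h4 : T.powerset.filter (· ⊆ T \ W) = (T \ W).powerset := by
      ext V
      simp only [Finset.mem_powerset, Finset.mem_filter]
      exact ⟨fun h => h.2, fun h => ⟨h.trans (Finset.sdiff_subset), h⟩⟩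
    rw [h4, ← Finset.sum_mul, alt_sum]
    by_cases hTW : T \ W = ∅
    · have hWT : W = T := le_antisymm hW (Finset.sdiff_eq_empty_iff_subset.mp hTW)
      rw [if_pos hTW, if_pos hWT, one_mul]
    · have hWT : W ≠ T := fun h => hTW (by simp [h])
      rw [if_neg hTW, if_neg hWT, zero_mul]
  rw [Finset.sum_congr rfl h2, Finset.sum_ite_eq' T.powerset T g,
    if_pos (Finset.mem_powerset_self T)]

/-- Decomposition of the `n`-fold containment probability over exact unions. -/
lemma sum_union_subset (B n : ℕ) (U : Finset (Fin B)) :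
    (∑ s ∈ U.powerset, wnu B s) ^ n =
      ∑ W ∈ U.powerset, ∑ f : Fin n → Finset (Fin B),
        if Finset.univ.biUnion f = W then ∏ u, wnu B (f u) else 0 := by
  rw [Finset.sum_pow']
  rw [Finset.sum_comm]
  have h1 : ∀ f : Fin n → Finset (Fin B),
      (∑ W ∈ U.powerset, if Finset.univ.biUnion f = W then ∏ u, wnu B (f u) else 0)
      = if Finset.univ.biUnion f ∈ U.powerset then ∏ u, wnu B (f u) else 0 :=
    fun f => Finset.sum_ite_eq U.powerset _ _
  rw [Finset.sum_congr rfl fun f _ => h1 f]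
  rw [← Finset.sum_filter]
  refine (Finset.sum_congr ?_ fun _ _ => rfl).symm
  ext f
  simp only [Finset.mem_filter, Finset.mem_univ, true_and, Fintype.mem_piFinset,
    Finset.mem_powerset, Finset.biUnion_subset]
  tauto

/-- for `B ≥ 1`, `n ≥ 1` and `0 ≤ v ≤ B`, in the `γ = μ` model,
`p_n(v;μ) = C(B,v) ∑_{l=0}^{v} C(v,l) (-1)^l (B-v+l+1)^{-n}`. -/
theorem stmt5 (B n v : ℕ) (hB : 1 ≤ B) (hn : 1 ≤ n) (hv : v ≤ B) :
    pnu B n v = (B.choose v : ℝ) *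
      ∑ l ∈ Finset.range (v + 1),
        (v.choose l : ℝ) * (-1 : ℝ) ^ l / ((B : ℝ) - v + l + 1) ^ n := by
  classical
  set G : Finset (Fin B) → ℝ := fun T =>
    ∑ f : Fin n → Finset (Fin B),
      if Finset.univ.biUnion f = T then ∏ u, wnu B (f u) else 0 with hG
  -- Step 1 : group by the exact union
  have step1 : pnu B n v
      = ∑ T ∈ Finset.powersetCard v (Finset.univ : Finset (Fin B)), G T := by
    have key : ∀ f : Fin n → Finset (Fin B),
        (if (Finset.univ.biUnion f).card = v then ∏ u, wnu B (f u) else 0)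
        = ∑ T ∈ Finset.powersetCard v (Finset.univ : Finset (Fin B)),
            if Finset.univ.biUnion f = T then ∏ u, wnu B (f u) else 0 := by
      intro f
      rw [Finset.sum_ite_eq]
      have hmem : Finset.univ.biUnion f ∈ Finset.powersetCard v (Finset.univ : Finset (Fin B))
          ↔ (Finset.univ.biUnion f).card = v := by
        simp [Finset.mem_powersetCard_univ]
      exact if_congr hmem.symm rfl rfl
    rw [pnu, Finset.sum_congr rfl fun f _ => key f, Finset.sum_comm]
  -- Step 2 : Möbius inversion for each `T`
  have step2 : ∀ T ∈ Finset.powersetCard v (Finset.univ : Finset (Fin B)),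
      G T = ∑ U ∈ T.powerset,
        (-1 : ℝ) ^ ((T \ U).card) * (1 / ((B : ℝ) + 1 - U.card)) ^ n := by
    intro T _
    rw [mobius G T]
    refine Finset.sum_congr rfl fun U _ => ?_
    congr 1
    rw [← sum_union_subset, sum_wnu_powerset]
  -- Step 3 : group subsets of `T` by cardinality
  have step3 : ∀ T ∈ Finset.powersetCard v (Finset.univ : Finset (Fin B)),
      (∑ U ∈ T.powerset,
        (-1 : ℝ) ^ ((T \ U).card) * (1 / ((B : ℝ) + 1 - U.card)) ^ n)
      = ∑ k ∈ Finset.range (v + 1),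
          (v.choose k) • ((-1 : ℝ) ^ (v - k) * (1 / ((B : ℝ) + 1 - k)) ^ n) := by
    intro T hT
    have hTv : T.card = v := (Finset.mem_powersetCard_univ).mp hT
    calc ∑ U ∈ T.powerset, (-1 : ℝ) ^ ((T \ U).card) * (1 / ((B : ℝ) + 1 - U.card)) ^ n
        = ∑ U ∈ T.powerset,
            (fun m : ℕ => (-1 : ℝ) ^ (v - m) * (1 / ((B : ℝ) + 1 - m)) ^ n) U.card := by
          refine Finset.sum_congr rfl fun U hU => ?_
          rw [Finset.mem_powerset] at hU
          rw [Finset.card_sdiff_of_subset hU, hTv]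
      _ = ∑ k ∈ Finset.range (T.card + 1),
            (T.card.choose k) • ((-1 : ℝ) ^ (v - k) * (1 / ((B : ℝ) + 1 - k)) ^ n) :=
          Finset.sum_powerset_apply_card
            (f := fun m : ℕ => (-1 : ℝ) ^ (v - m) * (1 / ((B : ℝ) + 1 - m)) ^ n)
      _ = ∑ k ∈ Finset.range (v + 1),
            (v.choose k) • ((-1 : ℝ) ^ (v - k) * (1 / ((B : ℝ) + 1 - k)) ^ n) := by
          rw [hTv]
  -- Step 4 : the reindexed inner sum
  have hsum : (∑ k ∈ Finset.range (v + 1),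
        (v.choose k) • ((-1 : ℝ) ^ (v - k) * (1 / ((B : ℝ) + 1 - k)) ^ n))
      = ∑ l ∈ Finset.range (v + 1),
          (v.choose l : ℝ) * (-1 : ℝ) ^ l / ((B : ℝ) - v + l + 1) ^ n := by
    rw [← Finset.sum_range_reflect
      (fun l => (v.choose l : ℝ) * (-1 : ℝ) ^ l / ((B : ℝ) - v + l + 1) ^ n) (v + 1)]
    refine Finset.sum_congr rfl fun k hk => ?_
    rw [Finset.mem_range, Nat.lt_succ_iff] at hk
    have h1 : v + 1 - 1 - k = v - k := by omega
    rw [h1, Nat.choose_symm hk, Nat.cast_sub hk]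
    have h3 : (B : ℝ) - v + ((v : ℝ) - k) + 1 = (B : ℝ) + 1 - k := by ring
    rw [h3, nsmul_eq_mul, one_div, inv_pow, ← div_eq_mul_inv, mul_div_assoc]
  rw [step1, Finset.sum_congr rfl step2, Finset.sum_congr rfl step3,
    Finset.sum_const, Finset.card_powersetCard, Finset.card_univ, Fintype.card_fin,
    nsmul_eq_mul, hsum]
end

section
/- Fix an integer B ≥ 1 and define, for n ≥ 0 and 0 ≤ v ≤ B, the real number d_n(v) = C(B,v) · ∑_{l=0}^{v} C(v,l) (−1)^l (B−v+l+1)^{−n}. Then for every n ≥ 1 and every 1 ≤ v ≤ B, d_n(v) − d_{n−1}(v)/(B−v+1) = d_n(v−1). -/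
/-- The closed-form expression `d_n(v) = C(B,v) ∑_{l=0}^{v} C(v,l) (-1)^l (B-v+l+1)^{-n}`. -/
noncomputable def dform (B n v : ℕ) : ℝ :=
  (B.choose v : ℝ) * ∑ l ∈ Finset.range (v + 1),
    (v.choose l : ℝ) * (-1 : ℝ) ^ l / ((B : ℝ) - v + l + 1) ^ n

/-- for `B ≥ 1`, `n ≥ 1` and `1 ≤ v ≤ B`,
`d_n(v) - d_{n-1}(v)/(B-v+1) = d_n(v-1)`. -/
theorem stmt8 (B n v : ℕ) (hB : 1 ≤ B) (hn : 1 ≤ n) (hv1 : 1 ≤ v) (hvB : v ≤ B) :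
    dform B n v - dform B (n - 1) v / ((B : ℝ) - v + 1) = dform B n (v - 1) := by
  obtain ⟨w, rfl⟩ : ∃ w, v = w + 1 := ⟨v - 1, by omega⟩
  obtain ⟨k, rfl⟩ : ∃ k, n = k + 1 := ⟨n - 1, by omega⟩
  have hw : w < B := by omega
  simp only [Nat.add_sub_cancel]
  have hwR : (w : ℝ) < B := by exact_mod_cast hw
  have hD : (0:ℝ) < (B:ℝ) - ((w:ℝ)+1) + 1 := by push_cast; linarith
  simp only [dform]
  rw [mul_div_assoc, ← mul_sub, Finset.sum_div, ← Finset.sum_sub_distrib,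
    Finset.sum_range_succ']
  have h0 : ((((w+1).choose 0 : ℝ) * (-1:ℝ)^0 / ((B:ℝ) - ((w+1):ℕ) + (0:ℕ) + 1)^(k+1))
      - ((w+1).choose 0 : ℝ) * (-1:ℝ)^0 / ((B:ℝ) - ((w+1):ℕ) + (0:ℕ) + 1)^k / ((B:ℝ) - ((w+1):ℕ) + 1)) = 0 := by
    have hE : ((B:ℝ) - ((w+1):ℕ) + (0:ℕ) + 1) = (B:ℝ) - ((w+1):ℕ) + 1 := by push_cast; ring
    rw [hE, pow_succ]
    have hne : ((B:ℝ) - ((w+1):ℕ) + 1) ≠ 0 := by push_cast; push_cast at hD; linarith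
    field_simp
    ring
  rw [h0, add_zero, Finset.mul_sum, Finset.mul_sum]
  refine Finset.sum_congr rfl fun m hm => ?_
  -- termwise
  have hkey : (B.choose (w+1) : ℕ) * ((w+1).choose (m+1)) * (m+1)
      = B.choose w * (w.choose m) * (B - w) := by
    have h1 : (w+1) * w.choose m = (w+1).choose (m+1) * (m+1) := Nat.add_one_mul_choose_eq w m
    have h2 : B.choose (w+1) * (w+1) = B.choose w * (B - w) := Nat.choose_succ_right_eq B w
    calc B.choose (w+1) * ((w+1).choose (m+1)) * (m+1)
        = B.choose (w+1) * ((w+1).choose (m+1) * (m+1)) := by ring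
      _ = B.choose (w+1) * ((w+1) * w.choose m) := by rw [← h1]
      _ = (B.choose (w+1) * (w+1)) * w.choose m := by ring
      _ = B.choose w * (B - w) * w.choose m := by rw [h2]
      _ = B.choose w * w.choose m * (B - w) := by ring
  have hkeyR : (B.choose (w+1) : ℝ) * ((w+1).choose (m+1) : ℝ) * ((m:ℝ)+1)
      = (B.choose w : ℝ) * (w.choose m : ℝ) * ((B:ℝ) - w) := by
    have := congrArg (Nat.cast : ℕ → ℝ) hkey
    push_cast [Nat.cast_sub hw.le] at this
    linarith [this]
  obtain ⟨E, hEdef⟩ : ∃ E : ℝ, E = (B:ℝ) - w + m + 1 := ⟨_, rfl⟩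
  have hE0 : 0 < E := by rw [hEdef]; push_cast; linarith
  have hE1 : ((B:ℝ) - ((w+1):ℕ) + ((m+1):ℕ) + 1) = E := by rw [hEdef]; push_cast; ring
  have hE2 : ((B:ℝ) - ((w+1):ℕ) + 1) = E - ((m:ℝ)+1) := by rw [hEdef]; push_cast; ring
  have hkeyR' : (B.choose (w+1) : ℝ) * ((w+1).choose (m+1) : ℝ) * ((m:ℝ)+1)
      = (B.choose w : ℝ) * (w.choose m : ℝ) * (E - ((m:ℝ)+1)) := by
    rw [hkeyR, hEdef]; ring
  have hEne : E ≠ 0 := ne_of_gt hE0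
  have hDne : E - ((m:ℝ)+1) ≠ 0 := by
    push_cast at hD; rw [hEdef]; intro h; nlinarith
  rw [hE1, hE2, ← hEdef, pow_succ]
  field_simp
  linear_combination (E^k) * hkeyR'
end

section
/- For every integer B ≥ 1 and every real number x ≥ 0, ∑_{n=0}^{∞} (e^{−x} x^n / n!) · ( ∑_{l=0}^{B} C(B,l) (−1)^l (l+1)^{−n} ) = ∑_{l=0}^{B} C(B,l) (−1)^l e^{−x·l/(l+1)}; the series on the left converges absolutely. -/
lemma exp_tsum' (y : ℝ) : (∑' n : ℕ, y ^ n / n.factorial) = Real.exp y := by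
  rw [Real.exp_eq_exp_ℝ, NormedSpace.exp_eq_tsum_div]

/-- for every integer `B ≥ 1` and every real `x ≥ 0`, the series
`∑_{n=0}^{∞} (e^{-x} x^n / n!) ∑_{l=0}^{B} C(B,l) (-1)^l (l+1)^{-n}` converges
absolutely and equals `∑_{l=0}^{B} C(B,l) (-1)^l e^{-x l/(l+1)}`. -/
theorem stmt9 (B : ℕ) (hB : 1 ≤ B) (x : ℝ) (hx : 0 ≤ x) :
    Summable (fun n : ℕ => |Real.exp (-x) * x ^ n / n.factorial *
        ∑ l ∈ Finset.range (B + 1),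
          (B.choose l : ℝ) * (-1 : ℝ) ^ l / ((l : ℝ) + 1) ^ n|) ∧
    (∑' n : ℕ, Real.exp (-x) * x ^ n / n.factorial *
        ∑ l ∈ Finset.range (B + 1),
          (B.choose l : ℝ) * (-1 : ℝ) ^ l / ((l : ℝ) + 1) ^ n)
      = ∑ l ∈ Finset.range (B + 1),
          (B.choose l : ℝ) * (-1 : ℝ) ^ l * Real.exp (-x * l / ((l : ℝ) + 1)) := by
  -- summability of each column (fixed l)
  have hcol : ∀ l : ℕ, Summable (fun n : ℕ =>
      Real.exp (-x) * x ^ n / n.factorial *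
        ((B.choose l : ℝ) * (-1 : ℝ) ^ l / ((l : ℝ) + 1) ^ n)) := by
    intro l
    have h := (Real.summable_pow_div_factorial (x / ((l : ℝ) + 1))).mul_left
      (Real.exp (-x) * ((B.choose l : ℝ) * (-1 : ℝ) ^ l))
    refine h.congr fun n => ?_
    have hl : ((l : ℝ) + 1) ≠ 0 := by positivity
    field_simp [div_pow]
    ring_nf
    simp only [mul_assoc, ← mul_pow, inv_mul_cancel₀ (by positivity : (1 + (l : ℝ)) ≠ 0), one_pow, mul_one]
  have hcolval : ∀ l : ℕ,
      (∑' n : ℕ, Real.exp (-x) * x ^ n / n.factorial *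
        ((B.choose l : ℝ) * (-1 : ℝ) ^ l / ((l : ℝ) + 1) ^ n))
      = (B.choose l : ℝ) * (-1 : ℝ) ^ l * Real.exp (-x * l / ((l : ℝ) + 1)) := by
    intro l
    have hl : ((l : ℝ) + 1) ≠ 0 := by positivity
    have h1 : (fun n : ℕ => Real.exp (-x) * x ^ n / n.factorial *
        ((B.choose l : ℝ) * (-1 : ℝ) ^ l / ((l : ℝ) + 1) ^ n))
        = fun n : ℕ => (Real.exp (-x) * ((B.choose l : ℝ) * (-1 : ℝ) ^ l)) *
          ((x / ((l : ℝ) + 1)) ^ n / n.factorial) := by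
      funext n
      field_simp [div_pow]
      ring_nf
      simp only [mul_assoc, ← mul_pow, inv_mul_cancel₀ (by positivity : (1 + (l : ℝ)) ≠ 0), one_pow, mul_one]
    rw [h1, tsum_mul_left, exp_tsum', mul_comm (Real.exp (-x)) _, mul_assoc,
      ← Real.exp_add]
    congr 1
    field_simp
    ring
  constructor
  · refine Summable.of_nonneg_of_le (fun n => abs_nonneg _)
      (fun n => ?_)
      ((Real.summable_pow_div_factorial x).mul_left (Real.exp (-x) * 2 ^ B))
    have hb : |∑ l ∈ Finset.range (B + 1),
        (B.choose l : ℝ) * (-1 : ℝ) ^ l / ((l : ℝ) + 1) ^ n| ≤ 2 ^ B := by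
      calc |∑ l ∈ Finset.range (B + 1),
          (B.choose l : ℝ) * (-1 : ℝ) ^ l / ((l : ℝ) + 1) ^ n|
          ≤ ∑ l ∈ Finset.range (B + 1),
            |(B.choose l : ℝ) * (-1 : ℝ) ^ l / ((l : ℝ) + 1) ^ n| :=
          Finset.abs_sum_le_sum_abs _ _
        _ ≤ ∑ l ∈ Finset.range (B + 1), (B.choose l : ℝ) := by
          refine Finset.sum_le_sum fun l _ => ?_
          rw [abs_div, abs_mul, abs_pow, abs_neg, abs_one, one_pow, mul_one,
            Nat.abs_cast]
          have h1 : (1 : ℝ) ≤ ((l : ℝ) + 1) ^ n :=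
            one_le_pow₀ (by linarith [Nat.cast_nonneg (α := ℝ) l])
          rw [abs_of_nonneg (by positivity)]
          calc (B.choose l : ℝ) / ((l : ℝ) + 1) ^ n ≤ (B.choose l : ℝ) / 1 :=
              div_le_div_of_nonneg_left (by positivity) one_pos h1 |>.trans_eq rfl
            _ = (B.choose l : ℝ) := div_one _
        _ = 2 ^ B := by
          rw [← Nat.cast_sum, Nat.sum_range_choose]; push_cast; ring
    have hpos : 0 ≤ Real.exp (-x) * x ^ n / n.factorial := by positivity
    calc |Real.exp (-x) * x ^ n / n.factorial * ∑ l ∈ Finset.range (B + 1),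
          (B.choose l : ℝ) * (-1 : ℝ) ^ l / ((l : ℝ) + 1) ^ n|
        = (Real.exp (-x) * x ^ n / n.factorial) *
          |∑ l ∈ Finset.range (B + 1),
            (B.choose l : ℝ) * (-1 : ℝ) ^ l / ((l : ℝ) + 1) ^ n| := by
          rw [abs_mul, abs_of_nonneg hpos]
      _ ≤ (Real.exp (-x) * x ^ n / n.factorial) * 2 ^ B :=
          mul_le_mul_of_nonneg_left hb hpos
      _ = Real.exp (-x) * 2 ^ B * (x ^ n / n.factorial) := by ring
  · have hswap : (fun n : ℕ => Real.exp (-x) * x ^ n / n.factorial *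
        ∑ l ∈ Finset.range (B + 1),
          (B.choose l : ℝ) * (-1 : ℝ) ^ l / ((l : ℝ) + 1) ^ n)
        = fun n : ℕ => ∑ l ∈ Finset.range (B + 1),
          Real.exp (-x) * x ^ n / n.factorial *
            ((B.choose l : ℝ) * (-1 : ℝ) ^ l / ((l : ℝ) + 1) ^ n) := by
      funext n; rw [Finset.mul_sum]
    rw [hswap, Summable.tsum_finsetSum (fun l _ => hcol l)]
    exact Finset.sum_congr rfl fun l _ => hcolval l
end

section
/- Fix an integer B ≥ 1 and a real ρ ≥ 0. The steady-state swarm self-sustainability in the γ = μ model, defined as p(B;μ) = ∑_{n=0}^{∞} e^{−(B+1)ρ} ((B+1)ρ)^n / n! · P(|S_1 ∪ ⋯ ∪ S_n| = B), equals ∑_{l=0}^{B} C(B,l) (−1)^l e^{−(B+1)ρ·l/(l+1)}. -/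
open Finset

private lemma choose_hockey (B a : ℕ) (ha : a ≤ B) :
    ∑ h ∈ Finset.range (a + 1), (B - h).choose (a - h) = (B + 1).choose a := by
  have key : ∑ m ∈ Finset.Icc (B - a) B, m.choose (B - a) = (B + 1).choose (B - a + 1) :=
    Nat.sum_Icc_choose B (B - a)
  rw [← Finset.Ico_add_one_right_eq_Icc, Finset.sum_Ico_eq_sum_range, show B + 1 - (B - a) = a + 1 by omega] at key
  calc ∑ h ∈ Finset.range (a + 1), (B - h).choose (a - h)
      = ∑ j ∈ Finset.range (a + 1), (B - a + j).choose (B - a) := by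
        rw [← Finset.sum_range_reflect (fun h => (B - h).choose (a - h)) (a + 1)]
        refine Finset.sum_congr rfl fun j hj => ?_
        rw [Finset.mem_range, Nat.lt_succ_iff] at hj
        rw [show B - (a + 1 - 1 - j) = B - a + j by omega,
            show a - (a + 1 - 1 - j) = j by omega]
        rw [← Nat.choose_symm (show B - a ≤ B - a + j by omega)]
        congr 1; omega
    _ = (B + 1).choose (B - a + 1) := key
    _ = (B + 1).choose a := by
        rw [← Nat.choose_symm (show B - a + 1 ≤ B + 1 by omega)]
        congr 1; omega

private lemma key_real (B a : ℕ) (ha : a ≤ B) :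
    ∑ h ∈ Finset.range (a + 1), (a.choose h : ℝ) * (1 / (((B : ℝ) + 1) * (B.choose h))) =
      1 / (((B - a : ℕ) : ℝ) + 1) := by
  have step : ∀ h ∈ Finset.range (a + 1),
      (a.choose h : ℝ) * (1 / (((B : ℝ) + 1) * (B.choose h))) =
        ((B - h).choose (a - h) : ℝ) / (((B : ℝ) + 1) * (B.choose a)) := by
    intro h hh
    rw [Finset.mem_range, Nat.lt_succ_iff] at hh
    have hnat : B.choose a * a.choose h = B.choose h * (B - h).choose (a - h) :=
      Nat.choose_mul hh
    have hcast : (B.choose a : ℝ) * (a.choose h : ℝ)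
        = (B.choose h : ℝ) * ((B - h).choose (a - h) : ℝ) := by exact_mod_cast hnat
    have h1 : (0 : ℝ) < (B.choose h : ℝ) := by
      exact_mod_cast Nat.choose_pos (hh.trans ha)
    have h2 : (0 : ℝ) < (B.choose a : ℝ) := by exact_mod_cast Nat.choose_pos ha
    have hB1 : ((B : ℝ) + 1) ≠ 0 := by positivity
    field_simp
    linear_combination hcast
  rw [Finset.sum_congr rfl step, ← Finset.sum_div]
  have hsum : ∑ h ∈ Finset.range (a + 1), ((B - h).choose (a - h) : ℝ)
      = ((B + 1).choose a : ℝ) := by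
    exact_mod_cast congrArg (Nat.cast : ℕ → ℝ) (choose_hockey B a ha)
  rw [hsum]
  have hnat2 : B.choose a * (B + 1) = (B + 1).choose a * (B + 1 - a) :=
    Nat.choose_mul_succ_eq B a
  have hcast2 : (B.choose a : ℝ) * ((B : ℝ) + 1)
      = ((B + 1).choose a : ℝ) * (((B - a : ℕ) : ℝ) + 1) := by
    have : ((B + 1 - a : ℕ) : ℝ) = ((B - a : ℕ) : ℝ) + 1 := by
      push_cast [show B + 1 - a = (B - a) + 1 by omega]; ring
    rw [← this]; exact_mod_cast hnat2
  have h2 : (0 : ℝ) < (B.choose a : ℝ) := by exact_mod_cast Nat.choose_pos ha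
  have h3 : (0 : ℝ) < (((B - a : ℕ) : ℝ) + 1) := by positivity
  have hB1 : (0:ℝ) < ((B : ℝ) + 1) := by positivity
  rw [div_eq_div_iff (by positivity) h3.ne']
  linear_combination -hcast2

private lemma sum_powerset_wnu (B : ℕ) (A : Finset (Fin B)) :
    ∑ s ∈ A.powerset, wnu B s = 1 / (((B - A.card : ℕ) : ℝ) + 1) := by
  have hA : A.card ≤ B := by
    simpa using Finset.card_le_card (Finset.subset_univ A)
  have h0 : ∑ s ∈ A.powerset, wnu B s
      = ∑ m ∈ Finset.range (A.card + 1),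
          (A.card.choose m) • (1 / (((B : ℝ) + 1) * (B.choose m))) :=
    Finset.sum_powerset_apply_card (fun m => 1 / (((B : ℝ) + 1) * (B.choose m)))
  rw [h0, ← key_real B A.card hA]
  exact Finset.sum_congr rfl fun m _ => by rw [nsmul_eq_mul]

private lemma indicator_ie (B : ℕ) (U : Finset (Fin B)) :
    (if U = Finset.univ then (1 : ℝ) else 0) =
      ∑ A : Finset (Fin B), (if U ⊆ A then ((-1 : ℝ)) ^ (B - A.card) else 0) := by
  classical
  have h1 : ∑ A : Finset (Fin B), (if U ⊆ A then ((-1 : ℝ)) ^ (B - A.card) else 0)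
      = ∑ C : Finset (Fin B), (if C ⊆ Uᶜ then ((-1 : ℝ)) ^ C.card else 0) := by
    refine Fintype.sum_bijective compl compl_involutive.bijective _ _ fun C => ?_
    have h2 : C.card ≤ B := by simpa using Finset.card_le_card (Finset.subset_univ C)
    have h4 : Cᶜ.card = B - C.card := by simp [Finset.card_compl]
    have h5 : B - (B - C.card) = C.card := by omega
    simp [Finset.compl_subset_compl, h4, h5, Finset.subset_compl_comm]
  rw [h1]
  have h2 : ∑ C : Finset (Fin B), (if C ⊆ Uᶜ then ((-1 : ℝ)) ^ C.card else 0)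
      = ∑ C ∈ Uᶜ.powerset, ((-1 : ℝ)) ^ C.card := by
    rw [← Finset.sum_filter]
    congr 1
    ext C
    simp [Finset.mem_powerset]
  rw [h2]
  have h3 : (∑ C ∈ Uᶜ.powerset, ((-1 : ℝ)) ^ C.card)
      = if Uᶜ = ∅ then (1 : ℝ) else 0 := by
    have h := Finset.sum_powerset_neg_one_pow_card (x := Uᶜ)
    calc (∑ C ∈ Uᶜ.powerset, ((-1 : ℝ)) ^ C.card)
        = ((∑ C ∈ Uᶜ.powerset, (-1 : ℤ) ^ C.card : ℤ) : ℝ) := by push_cast; rfl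
      _ = _ := by rw [h]; split <;> simp
  rw [h3]
  simp [Finset.compl_eq_empty_iff]

private lemma pnu_eq (B n : ℕ) :
    pnu B n B = ∑ l ∈ Finset.range (B + 1),
      (B.choose l : ℝ) * (-1 : ℝ) ^ l * (1 / ((l : ℝ) + 1)) ^ n := by
  classical
  have step1 : pnu B n B
      = ∑ f : Fin n → Finset (Fin B),
          (∏ u, wnu B (f u)) *
            ∑ A : Finset (Fin B),
              (if Finset.univ.biUnion f ⊆ A then ((-1 : ℝ)) ^ (B - A.card) else 0) := by
    unfold pnu
    refine Finset.sum_congr rfl fun f _ => ?_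
    rw [← indicator_ie]
    have hiff : (Finset.univ.biUnion f).card = B ↔ Finset.univ.biUnion f = Finset.univ := by
      rw [← Finset.card_eq_iff_eq_univ, Fintype.card_fin]
    split_ifs with hc hd hd
    · rw [mul_one]
    · exact absurd (hiff.mp hc) hd
    · exact absurd (hiff.mpr hd) hc
    · rw [mul_zero]
  have step2 : ∀ A : Finset (Fin B),
      (∑ f : Fin n → Finset (Fin B),
        (∏ u, wnu B (f u)) *
          (if Finset.univ.biUnion f ⊆ A then ((-1 : ℝ)) ^ (B - A.card) else 0))
      = ((-1 : ℝ)) ^ (B - A.card) * (1 / (((B - A.card : ℕ) : ℝ) + 1)) ^ n := by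
    intro A
    have hcond : ∀ f : Fin n → Finset (Fin B),
        (Finset.univ.biUnion f ⊆ A) ↔
          f ∈ Fintype.piFinset (fun _ : Fin n => A.powerset) := by
      intro f
      simp [Finset.biUnion_subset, Fintype.mem_piFinset, Finset.mem_powerset]
    calc (∑ f : Fin n → Finset (Fin B),
          (∏ u, wnu B (f u)) *
            (if Finset.univ.biUnion f ⊆ A then ((-1 : ℝ)) ^ (B - A.card) else 0))
        = ∑ f : Fin n → Finset (Fin B),
            (if f ∈ Fintype.piFinset (fun _ : Fin n => A.powerset) then
              ((-1 : ℝ)) ^ (B - A.card) * ∏ u, wnu B (f u) else 0) := by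
          refine Finset.sum_congr rfl fun f _ => ?_
          by_cases hf : Finset.univ.biUnion f ⊆ A
          · rw [if_pos hf, if_pos ((hcond f).mp hf)]; ring
          · rw [if_neg hf, if_neg fun h => hf ((hcond f).mpr h), mul_zero]
      _ = ∑ f ∈ Fintype.piFinset (fun _ : Fin n => A.powerset),
            ((-1 : ℝ)) ^ (B - A.card) * ∏ u, wnu B (f u) := by
          rw [← Finset.sum_filter]
          congr 1
          ext f
          simp
      _ = ((-1 : ℝ)) ^ (B - A.card) *
            ∑ f ∈ Fintype.piFinset (fun _ : Fin n => A.powerset), ∏ u, wnu B (f u) := by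
          rw [Finset.mul_sum]
      _ = ((-1 : ℝ)) ^ (B - A.card) * (1 / (((B - A.card : ℕ) : ℝ) + 1)) ^ n := by
          rw [← Finset.prod_univ_sum, sum_powerset_wnu]
          simp
  rw [step1]
  simp_rw [Finset.mul_sum]
  rw [Finset.sum_comm]
  rw [Finset.sum_congr rfl fun A _ => step2 A]
  have group := Finset.sum_powerset_apply_card
    (f := fun m => ((-1 : ℝ)) ^ (B - m) * (1 / (((B - m : ℕ) : ℝ) + 1)) ^ n)
    (x := (Finset.univ : Finset (Fin B)))
  rw [Finset.powerset_univ] at group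
  simp only [Finset.card_univ, Fintype.card_fin] at group
  rw [group]
  rw [← Finset.sum_range_reflect
    (fun l => (B.choose l : ℝ) * (-1 : ℝ) ^ l * (1 / ((l : ℝ) + 1)) ^ n) (B + 1)]
  refine Finset.sum_congr rfl fun m hm => ?_
  rw [Finset.mem_range, Nat.lt_succ_iff] at hm
  rw [show B + 1 - 1 - m = B - m from by omega, Nat.choose_symm hm, nsmul_eq_mul]
  ring

private lemma exp_tsum_aux (x : ℝ) :
    ∑' n : ℕ, x ^ n / (n.factorial : ℝ) = Real.exp x := by
  rw [Real.exp_eq_exp_ℝ, NormedSpace.exp_eq_tsum_div]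

/-- for `B ≥ 1` and `ρ ≥ 0`, the steady-state swarm
self-sustainability in the `γ = μ` model,
`p(B;μ) = ∑_{n=0}^{∞} e^{-(B+1)ρ} ((B+1)ρ)^n / n! · P(|S₁ ∪ ⋯ ∪ Sₙ| = B)`,
equals `∑_{l=0}^{B} C(B,l) (-1)^l e^{-(B+1)ρ l/(l+1)}`. -/
theorem stmt10 (B : ℕ) (hB : 1 ≤ B) (ρ : ℝ) (hρ : 0 ≤ ρ) :
    (∑' n : ℕ, Real.exp (-(((B : ℝ) + 1) * ρ)) * (((B : ℝ) + 1) * ρ) ^ n / n.factorial *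
        pnu B n B)
      = ∑ l ∈ Finset.range (B + 1),
          (B.choose l : ℝ) * (-1 : ℝ) ^ l *
            Real.exp (-(((B : ℝ) + 1) * ρ) * l / ((l : ℝ) + 1)) := by
  set c : ℝ := ((B : ℝ) + 1) * ρ with hc
  have hterm : ∀ n : ℕ,
      Real.exp (-c) * c ^ n / n.factorial * pnu B n B
        = ∑ l ∈ Finset.range (B + 1),
            (Real.exp (-c) * (B.choose l : ℝ) * (-1 : ℝ) ^ l) *
              ((c / ((l : ℝ) + 1)) ^ n / (n.factorial : ℝ)) := by
    intro n
    rw [pnu_eq, Finset.mul_sum]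
    refine Finset.sum_congr rfl fun l _ => ?_
    have hl : ((l : ℝ) + 1) ≠ 0 := by positivity
    rw [div_pow, one_pow, div_pow]
    field_simp
  rw [tsum_congr hterm]
  rw [Summable.tsum_finsetSum (f := fun (l : ℕ) (n : ℕ) =>
      (Real.exp (-c) * (B.choose l : ℝ) * (-1 : ℝ) ^ l) *
        ((c / ((l : ℝ) + 1)) ^ n / (n.factorial : ℝ)))
    (fun l _ =>
    ((Real.summable_pow_div_factorial (c / ((l : ℝ) + 1))).mul_left _))]
  refine Finset.sum_congr rfl fun l _ => ?_
  rw [tsum_mul_left, exp_tsum_aux]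
  have hl : ((l : ℝ) + 1) ≠ 0 := by positivity
  have hexp : Real.exp (-c) * Real.exp (c / ((l : ℝ) + 1))
      = Real.exp (-c * (l : ℝ) / ((l : ℝ) + 1)) := by
    rw [← Real.exp_add]
    congr 1
    field_simp
    ring
  calc Real.exp (-c) * (B.choose l : ℝ) * (-1 : ℝ) ^ l * Real.exp (c / ((l : ℝ) + 1))
      = (B.choose l : ℝ) * (-1 : ℝ) ^ l *
          (Real.exp (-c) * Real.exp (c / ((l : ℝ) + 1))) := by ring
    _ = (B.choose l : ℝ) * (-1 : ℝ) ^ l * Real.exp (-c * (l : ℝ) / ((l : ℝ) + 1)) := by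
        rw [hexp]
end

section
/- Fix an integer B ≥ 1 and a subset L of {1,…,B} with |L| = l ≥ 1. For every n ≥ 0, if S_1,…,S_n are independent draws from ν_B, then P(L ∩ (S_1 ∪ ⋯ ∪ S_n) = ∅) = (l+1)^{−n}. In particular, for a single draw S from ν_B, P(L ∩ S = ∅) = 1/(l+1). -/
lemma aux_choose (B l k : ℕ) (hl : l ≤ B) (hk : k ≤ B - l) :
    (B - l).choose k * B.choose l = (B - k).choose l * B.choose k := by
  have hk' : k ≤ B := le_trans hk (Nat.sub_le _ _)
  have hlk : l ≤ B - k := by omega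
  have h1 := Nat.choose_mul_factorial_mul_factorial hl
  have h2 := Nat.choose_mul_factorial_mul_factorial hk'
  have h3 := Nat.choose_mul_factorial_mul_factorial hlk
  have h4 := Nat.choose_mul_factorial_mul_factorial hk
  have he : B - l - k = B - k - l := by omega
  have hpos : 0 < k.factorial * l.factorial * (B - l - k).factorial :=
    Nat.mul_pos (Nat.mul_pos (Nat.factorial_pos _) (Nat.factorial_pos _)) (Nat.factorial_pos _)
  apply Nat.eq_of_mul_eq_mul_right hpos
  calc (B - l).choose k * B.choose l * (k.factorial * l.factorial * (B - l - k).factorial)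
      = ((B - l).choose k * k.factorial * (B - l - k).factorial) *
        (B.choose l * l.factorial) := by ring
    _ = (B - l).factorial * (B.choose l * l.factorial) := by rw [h4]
    _ = B.factorial := by rw [← h1]; ring
    _ = B.choose k * k.factorial * (B - k).factorial := by rw [h2]
    _ = B.choose k * k.factorial * ((B - k).choose l * l.factorial * (B - k - l).factorial) := by
        rw [h3]
    _ = (B - k).choose l * B.choose k * (k.factorial * l.factorial * (B - l - k).factorial) := by
        rw [he]; ring

lemma aux_sum (B l : ℕ) (hl : l ≤ B) :
    ∑ k ∈ Finset.range (B - l + 1), (B - k).choose l = (B + 1).choose (l + 1) := by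
  rw [← Finset.sum_range_reflect (fun k => (B - k).choose l) (B - l + 1)]
  have : ∀ k ∈ Finset.range (B - l + 1), (B - (B - l + 1 - 1 - k)).choose l = (l + k).choose l := by
    intro k hk
    simp only [Finset.mem_range] at hk
    congr 1
    omega
  rw [Finset.sum_congr rfl this]
  rw [← Nat.sum_Icc_choose B l]
  apply Finset.sum_nbij' (fun x => l + x) (fun m => m - l)
  · intro a ha; simp only [Finset.mem_range] at ha; simp only [Finset.mem_Icc]; omega
  · intro a ha; simp only [Finset.mem_Icc] at ha; simp only [Finset.mem_range]; omega
  · intro a ha; omega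
  · intro a ha; simp only [Finset.mem_Icc] at ha; omega
  · intro a _; rfl


lemma single_sum (B : ℕ) (L : Finset (Fin B)) (l : ℕ) (hL : L.card = l) :
    (∑ s : Finset (Fin B), if L ∩ s = ∅ then wnu B s else 0) = 1 / ((l : ℝ) + 1) := by
  have hlB : l ≤ B := by
    rw [← hL]; simpa using Finset.card_le_univ L
  rw [← Finset.sum_filter]
  have hset : Finset.univ.filter (fun s => L ∩ s = ∅) = Lᶜ.powerset := by
    ext s
    simp only [Finset.mem_filter, Finset.mem_univ, true_and, Finset.mem_powerset,
      Finset.eq_empty_iff_forall_notMem, Finset.subset_iff, Finset.mem_inter,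
      Finset.mem_compl]
    tauto
  rw [hset]
  simp only [wnu]
  rw [Finset.sum_powerset_apply_card (f := fun k => (1:ℝ)/((B+1)*(B.choose k)))]
  have hcard : Lᶜ.card = B - l := by
    simp [Finset.card_compl, hL]
  rw [hcard]
  have hB1 : ((B:ℝ)+1) ≠ 0 := by positivity
  have hCl : ((B.choose l : ℝ)) ≠ 0 := Nat.cast_ne_zero.2 (Nat.choose_pos hlB).ne'
  have hterm : ∀ k ∈ Finset.range (B - l + 1),
      (B-l).choose k • ((1:ℝ)/((B+1)*(B.choose k)))
        = ((B-k).choose l : ℝ) * (1/((B+1)*(B.choose l))) := by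
    intro k hk
    rw [Finset.mem_range] at hk
    have hk' : k ≤ B - l := by omega
    have hkB : k ≤ B := le_trans hk' (Nat.sub_le _ _)
    have hCk : ((B.choose k : ℝ)) ≠ 0 := Nat.cast_ne_zero.2 (Nat.choose_pos hkB).ne'
    have hid := aux_choose B l k hlB hk'
    have hidR : ((B-l).choose k : ℝ) * (B.choose l) = ((B-k).choose l : ℝ) * (B.choose k) := by
      exact_mod_cast congrArg (Nat.cast : ℕ → ℝ) hid
    rw [nsmul_eq_mul]
    field_simp
    linear_combination hidR
  rw [Finset.sum_congr rfl hterm, ← Finset.sum_mul]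
  have hsum : (∑ k ∈ Finset.range (B - l + 1), ((B-k).choose l : ℝ))
      = ((B+1).choose (l+1) : ℝ) := by
    rw [← aux_sum B l hlB]; push_cast; rfl
  rw [hsum]
  have hmul : ((B:ℝ)+1) * (B.choose l) = ((B+1).choose (l+1) : ℝ) * ((l:ℝ)+1) := by
    have h := Nat.add_one_mul_choose_eq B l
    have h' : ((B.succ * B.choose l : ℕ) : ℝ) = ((B.succ.choose l.succ * l.succ : ℕ) : ℝ) := by
      exact_mod_cast congrArg (Nat.cast : ℕ → ℝ) h
    push_cast at h'
    push_cast
    linarith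
  have hC1 : ((B+1).choose (l+1) : ℝ) ≠ 0 :=
    Nat.cast_ne_zero.2 (Nat.choose_pos (by omega)).ne'
  rw [hmul]
  field_simp


/-- for `B ≥ 1` and a subset `L` of the blocks with `|L| = l ≥ 1`:
for every `n ≥ 0`, if `S₁, …, Sₙ` are independent draws from `ν_B` then
`P(L ∩ (S₁ ∪ ⋯ ∪ Sₙ) = ∅) = (l+1)^{-n}`; in particular, for a single draw `S`,
`P(L ∩ S = ∅) = 1/(l+1)`. -/
theorem stmt11 (B : ℕ) (hB : 1 ≤ B) (L : Finset (Fin B)) (l : ℕ)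
    (hL : L.card = l) (hl : 1 ≤ l) :
    (∀ n : ℕ,
      (∑ f : Fin n → Finset (Fin B),
        if L ∩ Finset.univ.biUnion f = ∅ then ∏ u, wnu B (f u) else 0)
        = 1 / ((l : ℝ) + 1) ^ n) ∧
    (∑ s : Finset (Fin B), if L ∩ s = ∅ then wnu B s else 0) = 1 / ((l : ℝ) + 1) := by
  have key := single_sum B L l hL
  refine ⟨fun n => ?_, key⟩
  have step1 : (∑ f : Fin n → Finset (Fin B),
      if L ∩ Finset.univ.biUnion f = ∅ then ∏ u, wnu B (f u) else 0)
      = ∑ f : Fin n → Finset (Fin B), ∏ u, (if L ∩ f u = ∅ then wnu B (f u) else 0) := by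
    refine Finset.sum_congr rfl fun f _ => ?_
    by_cases h : ∀ u, L ∩ f u = ∅
    · rw [if_pos, Finset.prod_congr rfl fun u _ => if_pos (h u)]
      rw [Finset.eq_empty_iff_forall_notMem]
      intro x hx
      rw [Finset.mem_inter, Finset.mem_biUnion] at hx
      obtain ⟨hxL, u, _, hxu⟩ := hx
      have := h u
      rw [Finset.eq_empty_iff_forall_notMem] at this
      exact this x (Finset.mem_inter.2 ⟨hxL, hxu⟩)
    · simp only [not_forall] at h
      obtain ⟨u, hu⟩ := h
      have h0 : (if L ∩ f u = ∅ then wnu B (f u) else 0) = 0 := if_neg hu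
      rw [Finset.prod_eq_zero (f := fun v => if L ∩ f v = ∅ then wnu B (f v) else 0) (Finset.mem_univ u) h0]
      apply if_neg
      intro hcon
      apply hu
      rw [Finset.eq_empty_iff_forall_notMem] at hcon ⊢
      intro x hx
      rw [Finset.mem_inter] at hx
      exact hcon x (Finset.mem_inter.2 ⟨hx.1, Finset.mem_biUnion.2 ⟨u, Finset.mem_univ u, hx.2⟩⟩)
  rw [step1]
  have step2 : (∑ f : Fin n → Finset (Fin B), ∏ u, (if L ∩ f u = ∅ then wnu B (f u) else 0))
      = ∏ _u : Fin n, (∑ s : Finset (Fin B), if L ∩ s = ∅ then wnu B s else 0) := by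
    rw [Finset.prod_univ_sum]
    rw [← Fintype.piFinset_univ]
  rw [step2, key, Finset.prod_const, Finset.card_univ, Fintype.card_fin, div_pow, one_pow]
end
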